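/- arXiv:1103.2731 — 2 statements merged into one kernel-verified Lean document; each statement's English description precedes it below -/
import Mathlib

section
/- Let N be a sorting network with n levels. If two pseudoline arrangements supported by N have equal contact graphs (as directed multigraphs on the labeled vertex set {1,…,n}), then they are equal; equivalently, any pseudoline arrangement supported by N can be reconstructed from N together with its contact graph. -/
open Finset
open scoped Classical Pointwise

namespace BrickP

/-! ### Networks and pseudoline arrangements

A network with `n` levels (labeled `0,…,n-1` from bottom to top) and `m` commutators
(labeled `0,…,m-1` from left to right) is encoded by a word `N : Fin m → Fin (n-1)`:
the `j`-th commutator joins levels `(N j).1` and `(N j).1 + 1`.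
A pseudoline arrangement supported by `N` is encoded by its set `C` of crossings:
the word of adjacent transpositions read at the positions of `C` must be a reduced
expression of the longest element `w₀` of the symmetric group, i.e. its product is `w₀`
and its length is `n.choose 2`.  The contacts are the commutators not in `C`. -/

/-- The adjacent transposition of `Fin n` exchanging the levels `i` and `i+1`. -/
def adjT (n : ℕ) (i : Fin (n - 1)) : Equiv.Perm (Fin n) :=
  Equiv.swap ⟨i.1, by have := i.2; omega⟩ ⟨i.1 + 1, by have := i.2; omega⟩

/-- The longest element of the symmetric group on `Fin n`: the order-reversing permutation. -/
def w0 (n : ℕ) : Equiv.Perm (Fin n) := Fin.revPerm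

/-- `C` is the crossing set of a pseudoline arrangement supported by the network `N`. -/
def IsArr (n : ℕ) {m : ℕ} (N : Fin m → Fin (n - 1)) (C : Finset (Fin m)) : Prop :=
  C.card = n.choose 2 ∧
    (((List.finRange m).filter (fun j => j ∈ C)).map (fun j => adjT n (N j))).prod = w0 n

instance (n : ℕ) {m : ℕ} (N : Fin m → Fin (n - 1)) : DecidablePred (IsArr n N) := fun C => by
  unfold IsArr; infer_instance

/-- `statePerm n N C t i` is the level occupied by the `i`-th pseudoline of the arrangement
with crossing set `C` after the first `t` commutators of the network `N`. -/
def statePerm (n : ℕ) {m : ℕ} (N : Fin m → Fin (n - 1)) (C : Finset (Fin m)) :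
    ℕ → Equiv.Perm (Fin n)
  | 0 => 1
  | t + 1 =>
    (if h : t < m then (if (⟨t, h⟩ : Fin m) ∈ C then adjT n (N ⟨t, h⟩) else 1) else 1) *
      statePerm n N C t

/-- The `j`-th commutator has another commutator at the same level gap to its right;
the brick of the network associated to `j` is the bounded cell whose left wall is `j`. -/
def IsBrick {n m : ℕ} (N : Fin m → Fin (n - 1)) (j : Fin m) : Prop :=
  ∃ j' : Fin m, j < j' ∧ N j' = N j

instance {n m : ℕ} (N : Fin m → Fin (n - 1)) : DecidablePred (IsBrick N) := fun j => by
  unfold IsBrick; infer_instance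

/-- The `i`-th pseudoline of the arrangement `C` passes above the brick with left wall `j`
(equivalently, above the commutator `j`). -/
def Above (n : ℕ) {m : ℕ} (N : Fin m → Fin (n - 1)) (C : Finset (Fin m))
    (i : Fin n) (j : Fin m) : Prop :=
  (N j).1 < (statePerm n N C (j.1 + 1) i).1

instance (n : ℕ) {m : ℕ} (N : Fin m → Fin (n - 1)) (C : Finset (Fin m)) (i : Fin n) (j : Fin m) :
    Decidable (Above n N C i j) := by unfold Above; infer_instance

/-- The brick vector of an arrangement: its `i`-th coordinate is the number of bricks of the
network lying below the `i`-th pseudoline. -/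
noncomputable def brickVector (n : ℕ) {m : ℕ} (N : Fin m → Fin (n - 1)) (C : Finset (Fin m)) :
    Fin n → ℝ :=
  fun i => ((univ.filter (fun j : Fin m => IsBrick N j ∧ Above n N C i j)).card : ℝ)

/-- The brick polytope of a network: the convex hull of the brick vectors of all pseudoline
arrangements supported by it. -/
noncomputable def brickPolytope (n : ℕ) {m : ℕ} (N : Fin m → Fin (n - 1)) : Set (Fin n → ℝ) :=
  convexHull ℝ {x | ∃ C, IsArr n N C ∧ brickVector n N C = x}

/-! ### The contact graph -/

/-- The source of the arc of the contact graph associated to the contact `j`: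
the pseudoline passing above the contact. -/
def arcSrc (n : ℕ) {m : ℕ} (N : Fin m → Fin (n - 1)) (C : Finset (Fin m)) (j : Fin m) : Fin n :=
  (statePerm n N C (j.1 + 1))⁻¹ ⟨(N j).1 + 1, by have := (N j).2; omega⟩

/-- The target of the arc of the contact graph associated to the contact `j`:
the pseudoline passing below the contact. -/
def arcTgt (n : ℕ) {m : ℕ} (N : Fin m → Fin (n - 1)) (C : Finset (Fin m)) (j : Fin m) : Fin n :=
  (statePerm n N C (j.1 + 1))⁻¹ ⟨(N j).1, by have := (N j).2; omega⟩

/-- The contact graph of an arrangement, as the multiset of its arcs (a directed multigraph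
on the vertex set `Fin n`). -/
def contactMG (n : ℕ) {m : ℕ} (N : Fin m → Fin (n - 1)) (C : Finset (Fin m)) :
    Multiset (Fin n × Fin n) :=
  (univ.filter (fun j : Fin m => j ∉ C)).val.map (fun j => (arcSrc n N C j, arcTgt n N C j))

/-- There is an arc from `a` to `b` in the contact graph of the arrangement `C`. -/
def ArcRel (n : ℕ) {m : ℕ} (N : Fin m → Fin (n - 1)) (C : Finset (Fin m)) (a b : Fin n) : Prop :=
  ∃ j : Fin m, j ∉ C ∧ arcSrc n N C j = a ∧ arcTgt n N C j = b

/-- `a` and `b` lie in the same connected component of the contact graph of `C`. -/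
def ConnRel (n : ℕ) {m : ℕ} (N : Fin m → Fin (n - 1)) (C : Finset (Fin m)) (a b : Fin n) : Prop :=
  Relation.ReflTransGen (fun u v => ArcRel n N C u v ∨ ArcRel n N C v u) a b

/-- A network is irreducible when the contact graphs of all supported arrangements
are connected. -/
def Irreducible (n : ℕ) {m : ℕ} (N : Fin m → Fin (n - 1)) : Prop :=
  ∀ C, IsArr n N C → ∀ a b : Fin n, ConnRel n N C a b

/-- The contact graph of the arrangement `C` is an acyclic directed multigraph. -/
def AcyclicArcs (n : ℕ) {m : ℕ} (N : Fin m → Fin (n - 1)) (C : Finset (Fin m)) : Prop :=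
  ∀ a : Fin n, ¬ Relation.TransGen (ArcRel n N C) a a

/-! ### Polyhedral notions -/

/-- Dimension of a subset of `ℝⁿ`: the rank of the direction of its affine span. -/
noncomputable def dimOf {n : ℕ} (s : Set (Fin n → ℝ)) : ℕ :=
  Module.finrank ℝ (affineSpan ℝ s).direction

/-- The cone positively spanned by a set of vectors. -/
def coneOf {n : ℕ} (S : Set (Fin n → ℝ)) : Set (Fin n → ℝ) :=
  {x | ∃ (k : ℕ) (c : Fin k → ℝ) (v : Fin k → Fin n → ℝ),
      (∀ i, 0 ≤ c i) ∧ (∀ i, v i ∈ S) ∧ x = ∑ i, c i • v i}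

/-- Standard scalar product on `Fin n → ℝ`. -/
def dotp {n : ℕ} (u x : Fin n → ℝ) : ℝ := ∑ i, u i * x i

/-- The face of `P` minimizing the linear form `⟨u, ·⟩`. -/
def minFace {n : ℕ} (P : Set (Fin n → ℝ)) (u : Fin n → ℝ) : Set (Fin n → ℝ) :=
  {x | x ∈ P ∧ ∀ y ∈ P, dotp u x ≤ dotp u y}

/-- `u` is a normal vector of a facet of `P` (facet = face of codimension 1), with the
convention that the facet is the subset of `P` minimizing `⟨u, ·⟩`. -/
def IsFacetNormal {n : ℕ} (P : Set (Fin n → ℝ)) (u : Fin n → ℝ) : Prop :=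
  u ≠ 0 ∧ (minFace P u).Nonempty ∧ dimOf (minFace P u) + 1 = dimOf P

/-- `F` is a nonempty face of dimension `k` of the convex set `P`. -/
def IsKFace {n : ℕ} (P : Set (Fin n → ℝ)) (k : ℕ) (F : Set (Fin n → ℝ)) : Prop :=
  IsExtreme ℝ P F ∧ Convex ℝ F ∧ F.Nonempty ∧ dimOf F = k

/-- The characteristic vector of a subset of coordinates. -/
def charVec {n : ℕ} (V : Finset (Fin n)) : Fin n → ℝ := fun i => if i ∈ V then 1 else 0

/-! ### Directed cuts -/

/-- The arcs of the contact graph of `C` crossing the vertex partition `(Vᶜ, V)`. -/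
def cutArcs (n : ℕ) {m : ℕ} (N : Fin m → Fin (n - 1)) (C : Finset (Fin m)) (V : Finset (Fin n)) :
    Set (Fin n × Fin n) :=
  {p | ArcRel n N C p.1 p.2 ∧ ((p.1 ∈ V ∧ p.2 ∉ V) ∨ (p.1 ∉ V ∧ p.2 ∈ V))}

/-- `(Vᶜ, V)` is a minimal directed cut of the contact graph of `C`, with sink set `V`:
all crossing arcs are directed towards `V` and the set of crossing arcs is
inclusion-minimal among edge cuts. -/
def MinDirCut (n : ℕ) {m : ℕ} (N : Fin m → Fin (n - 1)) (C : Finset (Fin m))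
    (V : Finset (Fin n)) : Prop :=
  V.Nonempty ∧ V ≠ univ ∧ (∀ a b, ArcRel n N C a b → ¬(a ∈ V ∧ b ∉ V)) ∧
    ∀ W : Finset (Fin n), W.Nonempty → W ≠ univ →
      cutArcs n N C W ⊆ cutArcs n N C V → cutArcs n N C W = cutArcs n N C V

/-! ### The simplicial complex `Δ(N)` and the face maps `Φ`, `Ψ` -/

/-- `γ` is a face of the simplicial complex `Δ(N)`: the network obtained by erasing the
commutators of `γ` is still sorting, i.e. some supported arrangement has all of `γ`
among its contacts. -/
def IsFaceOfCplx (n : ℕ) {m : ℕ} (N : Fin m → Fin (n - 1)) (γ : Finset (Fin m)) : Prop :=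
  ∃ C, IsArr n N C ∧ Disjoint γ C

/-- `Φ` associates to `X ⊆ ℝⁿ` the set of commutators of `N` which are contacts in all
supported arrangements whose brick vector lies in `X`. -/
def PhiMap (n : ℕ) {m : ℕ} (N : Fin m → Fin (n - 1)) (X : Set (Fin n → ℝ)) : Set (Fin m) :=
  {j | ∀ C, IsArr n N C → brickVector n N C ∈ X → j ∉ C}

/-- `Ψ` associates to a set `γ` of commutators of `N` the convex hull of the brick vectors
of the arrangements of `Arr(N|γ)`, i.e. whose contacts contain `γ`. -/
noncomputable def PsiMap (n : ℕ) {m : ℕ} (N : Fin m → Fin (n - 1)) (γ : Set (Fin m)) :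
    Set (Fin n → ℝ) :=
  convexHull ℝ {x | ∃ C, IsArr n N C ∧ (∀ j ∈ γ, j ∉ C) ∧ brickVector n N C = x}

/-- Same component relation in the contact graph of `C` with the arcs of `γ` removed. -/
def ConnRelAvoid (n : ℕ) {m : ℕ} (N : Fin m → Fin (n - 1)) (C : Finset (Fin m))
    (γ : Set (Fin m)) (a b : Fin n) : Prop :=
  Relation.ReflTransGen
    (fun u v =>
      (∃ j : Fin m, j ∉ C ∧ j ∉ γ ∧ arcSrc n N C j = u ∧ arcTgt n N C j = v) ∨
      (∃ j : Fin m, j ∉ C ∧ j ∉ γ ∧ arcSrc n N C j = v ∧ arcTgt n N C j = u)) a b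

/-- One step of the quotient multigraph `Λ^#/(Λ^#∖γ^#)`: an arc of `γ^#` between the
components of `a` and `b` in `Λ^#∖γ^#`. -/
def QStep (n : ℕ) {m : ℕ} (N : Fin m → Fin (n - 1)) (C : Finset (Fin m)) (γ : Set (Fin m))
    (a b : Fin n) : Prop :=
  ∃ a' b' : Fin n, ConnRelAvoid n N C γ a a' ∧
    (∃ j : Fin m, j ∉ C ∧ j ∈ γ ∧ arcSrc n N C j = a' ∧ arcTgt n N C j = b') ∧
    ConnRelAvoid n N C γ b' b

/-- A set `γ` of commutators of `N` is `k`-admissible. -/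
def KAdmissible (n : ℕ) {m : ℕ} (N : Fin m → Fin (n - 1)) (γ : Set (Fin m)) (k : ℕ) : Prop :=
  ∃ C, IsArr n N C ∧ (∀ j ∈ γ, j ∉ C) ∧
    {S : Set (Fin n) | ∃ a, S = {b | ConnRelAvoid n N C γ a b}}.ncard = n - k ∧
    ∀ a, ¬ Relation.TransGen (QStep n N C γ) a a

/-! ### Restrictions of networks -/

/-- The pseudoline of the arrangement `C` entering the commutator `j` from below. -/
def pLow (n : ℕ) {m : ℕ} (N : Fin m → Fin (n - 1)) (C : Finset (Fin m)) (j : Fin m) : Fin n :=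
  (statePerm n N C j.1)⁻¹ ⟨(N j).1, by have := (N j).2; omega⟩

/-- The pseudoline of the arrangement `C` entering the commutator `j` from above. -/
def pHigh (n : ℕ) {m : ℕ} (N : Fin m → Fin (n - 1)) (C : Finset (Fin m)) (j : Fin m) : Fin n :=
  (statePerm n N C j.1)⁻¹ ⟨(N j).1 + 1, by have := (N j).2; omega⟩

/-- `U` is a connected component of the contact graph of the arrangement `C`. -/
def IsComp (n : ℕ) {m : ℕ} (N : Fin m → Fin (n - 1)) (C : Finset (Fin m))
    (U : Finset (Fin n)) : Prop :=
  ∃ a : Fin n, U = univ.filter (fun b => ConnRel n N C a b)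

/-- The commutators of `N` whose two incident pseudolines (w.r.t. the arrangement `C`)
both belong to `U`. -/
def commsIn (n : ℕ) {m : ℕ} (N : Fin m → Fin (n - 1)) (C : Finset (Fin m))
    (U : Finset (Fin n)) : Finset (Fin m) :=
  univ.filter (fun j => pLow n N C j ∈ U ∧ pHigh n N C j ∈ U)

/-- The restriction of the network `N` to the curves of the pseudolines of `U`
(w.r.t. the arrangement `C`): it has `U.card` levels, its commutators are those of
`commsIn n N C U` in left-right order, and the level of such a commutator is the number
of curves of `U` passing below it. -/
noncomputable def restNet (n : ℕ) {m : ℕ} (N : Fin m → Fin (n - 1)) (C : Finset (Fin m))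
    (U : Finset (Fin n)) (j' : Fin (commsIn n N C U).card) : Fin (U.card - 1) := by
  refine ⟨(U.filter (fun u =>
      (statePerm n N C (((commsIn n N C U).orderIsoOfFin rfl j').1).1 u).1 <
        (N ((commsIn n N C U).orderIsoOfFin rfl j').1).1)).card, ?_⟩
  set j : Fin m := ((commsIn n N C U).orderIsoOfFin rfl j').1 with hj
  have hmem : j ∈ commsIn n N C U := ((commsIn n N C U).orderIsoOfFin rfl j').2
  rw [commsIn, Finset.mem_filter] at hmem
  obtain ⟨-, hL, hH⟩ := hmem
  have hlowlvl : (statePerm n N C j.1 (pLow n N C j)).1 = (N j).1 := by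
    unfold pLow; rw [← Equiv.Perm.mul_apply, mul_inv_cancel, Equiv.Perm.one_apply]
  have hhighlvl : (statePerm n N C j.1 (pHigh n N C j)).1 = (N j).1 + 1 := by
    unfold pHigh; rw [← Equiv.Perm.mul_apply, mul_inv_cancel, Equiv.Perm.one_apply]
  have hne : pLow n N C j ≠ pHigh n N C j := by
    intro h; rw [h, hhighlvl] at hlowlvl; omega
  have hsub : U.filter (fun u => (statePerm n N C j.1 u).1 < (N j).1)
      ⊆ (U.erase (pLow n N C j)).erase (pHigh n N C j) := by
    intro u hu
    rw [Finset.mem_filter] at hu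
    rw [Finset.mem_erase, Finset.mem_erase]
    refine ⟨fun h => ?_, fun h => ?_, hu.1⟩
    · rw [h] at hu; omega
    · rw [h] at hu; omega
  have hcard := Finset.card_le_card hsub
  rw [Finset.card_erase_of_mem (Finset.mem_erase.mpr ⟨hne.symm, hH⟩),
    Finset.card_erase_of_mem hL] at hcard
  have hU2 : 2 ≤ U.card := Finset.one_lt_card.mpr ⟨_, hL, _, hH, hne⟩
  omega

/-- The indices, in the restricted network, of the commutators of `γ` belonging to the
restriction. -/
def restIdx (n : ℕ) {m : ℕ} (N : Fin m → Fin (n - 1)) (C : Finset (Fin m)) (U : Finset (Fin n))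
    (γ : Finset (Fin m)) : Finset (Fin (commsIn n N C U).card) :=
  univ.filter (fun j' => ((commsIn n N C U).orderIsoOfFin rfl j').1 ∈ γ)


/-! ### Kernels of networks, alternating networks, and the polygon of a word -/

/-- The commutators of `N` surviving in the `k`-kernel of `N` (obtained by erasing the
first `k` and last `k` levels together with all commutators incident to them). -/
def kernelComms (n : ℕ) {m : ℕ} (N : Fin m → Fin (n - 1)) (k : ℕ) : Finset (Fin m) :=
  univ.filter (fun j => k ≤ (N j).1 ∧ (N j).1 + k < n - 1)

/-- The `k`-kernel of the network `N`: a network with `n - 2k` levels. -/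
def kernelNet (n : ℕ) {m : ℕ} (N : Fin m → Fin (n - 1)) (k : ℕ) :
    Fin (kernelComms n N k).card → Fin (n - 2 * k - 1) :=
  fun j' => ⟨(N ((kernelComms n N k).orderIsoOfFin rfl j').1).1 - k, by
    have h := ((kernelComms n N k).orderIsoOfFin rfl j').2
    have h2 := (Finset.mem_filter.mp h).2
    omega⟩

/-- The commutator `j` is adjacent to the level `ℓ`. -/
def Touches {n m : ℕ} (N : Fin m → Fin (n - 1)) (ℓ : ℕ) (j : Fin m) : Prop :=
  (N j).1 = ℓ ∨ (N j).1 + 1 = ℓ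

/-- The network `N` is alternating: the commutators adjacent to each intermediate level are
alternatively located above and below it. -/
def IsAlternating {n m : ℕ} (N : Fin m → Fin (n - 1)) : Prop :=
  ∀ ℓ : ℕ, 0 < ℓ → ℓ + 1 < n → ∀ j j' : Fin m, j < j' →
    Touches N ℓ j → Touches N ℓ j' → (∀ j'', j < j'' → j'' < j' → ¬ Touches N ℓ j'') →
    N j ≠ N j'

/-- The `i`-th pseudoline of the arrangement `C` touches the level `ℓ` somewhere. -/
def TouchesLevel (n : ℕ) {m : ℕ} (N : Fin m → Fin (n - 1)) (C : Finset (Fin m))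
    (i : Fin n) (ℓ : ℕ) : Prop :=
  ∃ t, t ≤ m ∧ (statePerm n N C t i).1 = ℓ

/-- `M` is the reduced alternating sorting network `N_x` associated to the word
`x ∈ {a,b}^{n-2}` (where `a` is encoded by `true` and `b` by `false`): it is reduced
(it has `n.choose 2` commutators, all of which are crossings of its unique supported
pseudoline arrangement), alternating, and for each `i` its `(i+1)`-st pseudoline touches
the top level if `x i = a` and the bottom level if `x i = b`. -/
def IsNetworkOfWord (n : ℕ) {m : ℕ} (M : Fin m → Fin (n - 1)) (x : Fin (n - 2) → Bool) : Prop :=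
  m = n.choose 2 ∧ IsArr n M Finset.univ ∧ IsAlternating M ∧
    ∀ i : Fin (n - 2),
      (x i = true →
        TouchesLevel n M Finset.univ ⟨i.1 + 1, by have := i.2; omega⟩ (n - 1)) ∧
      (x i = false →
        TouchesLevel n M Finset.univ ⟨i.1 + 1, by have := i.2; omega⟩ 0)

/-- The position of the vertex `v` of the polygon `P_x` in the cyclic (counterclockwise)
order along the boundary of `P_x`: first `p_1`, then the vertices below the horizontal
axis from left to right, then `p_n`, then the vertices above the axis from right to left. -/
def cpos (n : ℕ) (x : Fin (n - 2) → Bool) (v : Fin n) : ℕ :=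
  if v.1 = 0 then 0
  else if v.1 = n - 1 then (univ.filter (fun i : Fin (n - 2) => x i = false)).card + 1
  else if h : v.1 = 0 ∨ v.1 = n - 1 then 0
  else if x ⟨v.1 - 1, by have := v.2; omega⟩ = false then
    (univ.filter (fun i : Fin (n - 2) => i.1 < v.1 - 1 ∧ x i = false)).card + 1
  else
    (univ.filter (fun i : Fin (n - 2) => x i = false)).card + 2 +
      (univ.filter (fun i : Fin (n - 2) => v.1 - 1 < i.1 ∧ x i = true)).card

/-- `c` lies strictly between `a` and `b`. -/
def Btw (a b c : ℕ) : Prop := min a b < c ∧ c < max a b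

/-- The diagonals `d` and `e` of the polygon `P_x` cross (in their interior): exactly one
endpoint of `e` lies on each side of `d`. -/
def CrossesIn (n : ℕ) (x : Fin (n - 2) → Bool) (d e : Fin n × Fin n) : Prop :=
  (Btw (cpos n x d.1) (cpos n x d.2) (cpos n x e.1) ∧
      ¬ Btw (cpos n x d.1) (cpos n x d.2) (cpos n x e.2)) ∨
  (¬ Btw (cpos n x d.1) (cpos n x d.2) (cpos n x e.1) ∧
      Btw (cpos n x d.1) (cpos n x d.2) (cpos n x e.2))

/-- `d` is an internal diagonal of the polygon `P_x`: its endpoints are distinct and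
non-consecutive on the boundary. -/
def IsInternal (n : ℕ) (x : Fin (n - 2) → Bool) (d : Fin n × Fin n) : Prop :=
  d.1 ≠ d.2 ∧ (cpos n x d.1 + 1) % n ≠ cpos n x d.2 ∧ (cpos n x d.2 + 1) % n ≠ cpos n x d.1

/-- The label of the commutator `j` of a reduced network: the pair of indices of the two
pseudolines of the unique supported arrangement which cross at `j` (smallest first). -/
def commLabel (n : ℕ) {m : ℕ} (M : Fin m → Fin (n - 1)) (j : Fin m) : Fin n × Fin n :=
  (pLow n M Finset.univ j, pHigh n M Finset.univ j)

/-! ### Multitriangulations: valid sequences and the sets `D(σ)` -/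

/-- The sequence `0^k σ 0^k ∈ {0,1}^n` obtained by appending `k` zeros before and after
`σ ∈ {0,1}^(n-2k)` (`1` is encoded by `true` and `0` by `false`). -/
def extSeq (n k : ℕ) (σ : Fin (n - 2 * k) → Bool) (t : Fin n) : Bool :=
  if h : k ≤ t.1 ∧ t.1 < k + (n - 2 * k) then σ ⟨t.1 - k, by omega⟩ else false

/-- The positions of the zeros of the extended sequence `0^k σ 0^k`. -/
def zeroSet (n k : ℕ) (σ : Fin (n - 2 * k) → Bool) : Finset (Fin n) :=
  univ.filter (fun t => extSeq n k σ t = false)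

/-- The set `D(σ)` of edges `[ζ_i(σ), ζ_{i+k}(σ)]` of the `n`-gon, where `ζ_i(σ)` denotes
the position of the `i`-th zero of `0^k σ 0^k`. -/
def DsetP (n k : ℕ) (σ : Fin (n - 2 * k) → Bool) (p : Fin n × Fin n) : Prop :=
  ∃ i : Fin (zeroSet n k σ).card, ∃ hik : i.1 + k < (zeroSet n k σ).card,
    p = (((zeroSet n k σ).orderIsoOfFin rfl i).1,
         ((zeroSet n k σ).orderIsoOfFin rfl ⟨i.1 + k, hik⟩).1)

/-- A sequence of `{0,1}^q` is `k`-valid if it is neither `0^q` nor `1^q` and contains no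
factor `1 0^r 1` with `r ≥ k`. -/
def KValid (q k : ℕ) (σ : Fin q → Bool) : Prop :=
  (∃ i, σ i = true) ∧ (∃ i, σ i = false) ∧
    ¬ ∃ i j : Fin q, i < j ∧ σ i = true ∧ σ j = true ∧
        (∀ t, i < t → t < j → σ t = false) ∧ k ≤ j.1 - i.1 - 1

/-! ### The simplicial complex `Δ_n^k` of multitriangulations -/

/-- `p` encodes a `k`-relevant diagonal of a convex `q`-gon with vertices `0,…,q-1` in
cyclic order: it has at least `k` vertices of the polygon (strictly) on each side. -/
def IsRelevantDiag (q k : ℕ) (p : Fin q × Fin q) : Prop :=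
  p.1.1 < p.2.1 ∧ p.1.1 + k + 1 ≤ p.2.1 ∧ k + p.2.1 + 1 ≤ q + p.1.1

/-- Two diagonals of the convex `q`-gon cross. -/
def DiagCross {q : ℕ} (p e : Fin q × Fin q) : Prop :=
  (p.1.1 < e.1.1 ∧ e.1.1 < p.2.1 ∧ p.2.1 < e.2.1) ∨
  (e.1.1 < p.1.1 ∧ p.1.1 < e.2.1 ∧ e.2.1 < p.2.1)

/-- `γ` is a face of the simplicial complex `Δ_q^k`: a `(k+1)`-crossing-free set of
`k`-relevant diagonals of the convex `q`-gon. -/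
def IsFaceDelta (q k : ℕ) (γ : Finset (Fin q × Fin q)) : Prop :=
  (∀ p ∈ γ, IsRelevantDiag q k p) ∧
    ∀ S ⊆ γ, S.card = k + 1 → ¬ (∀ p ∈ S, ∀ e ∈ S, p ≠ e → DiagCross p e)


def sgen (n : ℕ) {m : ℕ} (N : Fin m → Fin (n - 1)) (C : Finset (Fin m)) (t : ℕ) :
    Equiv.Perm (Fin n) :=
  if h : t < m then (if (⟨t, h⟩ : Fin m) ∈ C then adjT n (N ⟨t, h⟩) else 1) else 1

variable {n m : ℕ} (N : Fin m → Fin (n - 1)) (C : Finset (Fin m))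

lemma statePerm_succ (t : ℕ) :
    statePerm n N C (t + 1) = sgen n N C t * statePerm n N C t := rfl

lemma sgen_mul_self (t : ℕ) : sgen n N C t * sgen n N C t = 1 := by
  unfold sgen
  split_ifs <;> simp [adjT, Equiv.swap_mul_self]

lemma prod_range_sgen (t : ℕ) :
    ((List.range t).map (sgen n N C)).prod * statePerm n N C t = 1 := by
  induction t with
  | zero => simp [statePerm]
  | succ t ih =>
    rw [List.range_succ, List.map_append, List.prod_append, statePerm_succ]
    simp only [List.map_cons, List.map_nil, List.prod_cons, List.prod_nil, mul_one]
    rw [mul_assoc, ← mul_assoc (sgen n N C t), sgen_mul_self, one_mul, ih]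

lemma prod_filter_map {α M : Type*} [Monoid M] (p : α → Bool) (f : α → M) (l : List α) :
    ((l.filter p).map f).prod = (l.map (fun a => if p a then f a else 1)).prod := by
  induction l with
  | nil => simp
  | cons a l ih =>
    by_cases h : p a <;> simp [List.filter_cons, h, ih]

lemma statePerm_final (hC : IsArr n N C) : statePerm n N C m = w0 n := by
  have h1 := prod_range_sgen N C m
  have h2 : ((List.range m).map (sgen n N C)).prod = w0 n := by
    rw [← hC.2, prod_filter_map, ← (show (List.finRange m).map Fin.val = List.range m by apply List.ext_getElem <;> simp), List.map_map]
    refine congrArg List.prod (List.map_congr_left fun j _ => ?_)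
    simp [Function.comp, sgen, j.2, Fin.eta]
  rw [h2] at h1
  have h3 : statePerm n N C m = (w0 n)⁻¹ := by
    rw [← one_mul (statePerm n N C m)] at h1 ⊢
    exact (inv_eq_of_mul_eq_one_right h1).symm
  rw [h3]
  ext x
  simp [w0, Equiv.Perm.inv_def, Fin.revPerm_symm, Fin.val_rev]


lemma swap_lt_iff {c : ℕ} (hc : c + 1 < n) (x y : Fin n)
    (h1 : ¬(x.1 = c ∧ y.1 = c + 1)) (h2 : ¬(x.1 = c + 1 ∧ y.1 = c)) :
    ((Equiv.swap (⟨c, by omega⟩ : Fin n) ⟨c + 1, hc⟩ x).1 <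
      (Equiv.swap (⟨c, by omega⟩ : Fin n) ⟨c + 1, hc⟩ y).1 ↔ x.1 < y.1) := by
  simp only [Equiv.swap_apply_def]
  split_ifs <;> simp_all [Fin.ext_iff] <;> omega

lemma order_flip (t : ℕ) (i k : Fin n) :
    ((statePerm n N C (t + 1) i).1 < (statePerm n N C (t + 1) k).1 ↔
      (statePerm n N C t i).1 < (statePerm n N C t k).1) ∨
    ∃ h : t < m, (⟨t, h⟩ : Fin m) ∈ C ∧
      (((statePerm n N C t i).1 = (N ⟨t, h⟩).1 ∧
          (statePerm n N C t k).1 = (N ⟨t, h⟩).1 + 1) ∨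
        ((statePerm n N C t k).1 = (N ⟨t, h⟩).1 ∧
          (statePerm n N C t i).1 = (N ⟨t, h⟩).1 + 1)) := by
  rw [statePerm_succ]
  unfold sgen
  split_ifs with h hm
  · set c := (N ⟨t, h⟩).1 with hc
    have hcn : c + 1 < n := by have := (N ⟨t, h⟩).2; omega
    by_cases hmeet :
        ((statePerm n N C t i).1 = c ∧ (statePerm n N C t k).1 = c + 1) ∨
        ((statePerm n N C t k).1 = c ∧ (statePerm n N C t i).1 = c + 1)
    · exact Or.inr ⟨h, hm, hmeet⟩
    · left
      simp only [Equiv.Perm.mul_apply]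
      have heq : adjT n (N ⟨t, h⟩) = Equiv.swap (⟨c, by omega⟩ : Fin n) ⟨c + 1, hcn⟩ := by
        unfold adjT; rfl
      rw [heq]
      exact swap_lt_iff hcn _ _ (fun hh => hmeet (Or.inl hh))
        (fun hh => hmeet (Or.inr ⟨hh.2, hh.1⟩))
  · left; simp
  · left; simp

lemma cross_surj (hC : IsArr n N C) (i k : Fin n) (hik : i < k) :
    ∃ j : Fin m, j ∈ C ∧ (statePerm n N C j.1 i).1 = (N j).1 ∧
      (statePerm n N C j.1 k).1 = (N j).1 + 1 := by
  by_contra hno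
  push_neg at hno
  have key : ∀ t ≤ m, (statePerm n N C t i).1 < (statePerm n N C t k).1 := by
    intro t htm
    induction t with
    | zero => simpa [statePerm] using hik
    | succ t ih =>
      have ht := ih (by omega)
      rcases order_flip N C t i k with hpres | ⟨h, hmem, hcase⟩
      · exact hpres.mpr ht
      · rcases hcase with ⟨hi, hk⟩ | ⟨hk2, hi2⟩
        · exact absurd hk (hno ⟨t, h⟩ hmem hi)
        · omega
  have hfin := key m le_rfl
  rw [statePerm_final N C hC] at hfin
  simp only [w0, Fin.revPerm_apply, Fin.val_rev] at hfin
  have h1 := i.2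
  have h2 := k.2
  have h3 : i.1 < k.1 := hik
  omega

lemma pair_card :
    (univ.filter (fun p : Fin n × Fin n => p.1 < p.2)).card = n.choose 2 := by
  have hps := Finset.card_powersetCard 2 (univ : Finset (Fin n))
  rw [Finset.card_univ, Fintype.card_fin] at hps
  rw [← hps]
  apply Finset.card_bij (fun p _ => ({p.1, p.2} : Finset (Fin n)))
  · intro p hp
    rw [mem_filter] at hp
    rw [Finset.mem_powersetCard]
    exact ⟨Finset.subset_univ _, Finset.card_pair (ne_of_lt hp.2)⟩
  · intro p hp q hq hpq
    rw [mem_filter] at hp hq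
    have hp1 : p.1 ∈ ({q.1, q.2} : Finset (Fin n)) := hpq ▸ (by simp)
    have hp2 : p.2 ∈ ({q.1, q.2} : Finset (Fin n)) := hpq ▸ (by simp)
    simp only [Finset.mem_insert, Finset.mem_singleton] at hp1 hp2
    have hplt : p.1.1 < p.2.1 := hp.2
    have hqlt : q.1.1 < q.2.1 := hq.2
    have hv : p.1.1 = q.1.1 ∧ p.2.1 = q.2.1 := by
      rcases hp1 with h | h <;> rcases hp2 with h' | h' <;>
        [skip; skip; skip; skip] <;>
        (have e1 := congrArg Fin.val h; have e2 := congrArg Fin.val h'; omega)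
    exact Prod.ext (Fin.ext hv.1) (Fin.ext hv.2)
  · intro S hS
    rw [Finset.mem_powersetCard] at hS
    obtain ⟨x, y, hxy, rfl⟩ := Finset.card_eq_two.mp hS.2
    rcases lt_or_gt_of_ne hxy with h | h
    · exact ⟨(x, y), mem_filter.mpr ⟨mem_univ _, h⟩, rfl⟩
    · exact ⟨(y, x), mem_filter.mpr ⟨mem_univ _, h⟩, by rw [Finset.pair_comm]⟩

noncomputable def pairOf (j : Fin m) : Fin n × Fin n :=
  if pLow n N C j < pHigh n N C j then (pLow n N C j, pHigh n N C j)
  else (pHigh n N C j, pLow n N C j)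

lemma cross_injOn (hC : IsArr n N C) : Set.InjOn (pairOf N C) (C : Set (Fin m)) := by
  have hsub : (univ.filter (fun p : Fin n × Fin n => p.1 < p.2)) ⊆ C.image (pairOf N C) := by
    intro p hp
    rw [mem_filter] at hp
    obtain ⟨j, hj, hi, hk⟩ := cross_surj N C hC p.1 p.2 hp.2
    rw [Finset.mem_image]
    refine ⟨j, hj, ?_⟩
    have hl : pLow n N C j = p.1 := by
      unfold pLow
      rw [Equiv.Perm.inv_eq_iff_eq]
      exact (Fin.ext hi).symm
    have hh : pHigh n N C j = p.2 := by
      unfold pHigh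
      rw [Equiv.Perm.inv_eq_iff_eq]
      exact (Fin.ext hk).symm
    unfold pairOf
    rw [hl, hh, if_pos hp.2]
  have hcard : (C.image (pairOf N C)).card = C.card := by
    have h1 : n.choose 2 ≤ (C.image (pairOf N C)).card := by
      rw [← pair_card (n := n)]
      exact Finset.card_le_card hsub
    have h2 := Finset.card_image_le (s := C) (f := pairOf N C)
    have h0 := hC.1
    omega
  exact Finset.card_image_iff.mp hcard


lemma after_flip (hC : IsArr n N C) (j : Fin m) (hjC : j ∈ C) (a b : Fin n)
    (ha : (statePerm n N C j.1 a).1 = (N j).1 + 1)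
    (hb : (statePerm n N C j.1 b).1 = (N j).1) :
    ∀ u, j.1 < u → u ≤ m → (statePerm n N C u a).1 < (statePerm n N C u b).1 := by
  have hinj := cross_injOn N C hC
  have hpl : pLow n N C j = b := by
    unfold pLow; rw [Equiv.Perm.inv_eq_iff_eq]; exact (Fin.ext hb).symm
  have hph : pHigh n N C j = a := by
    unfold pHigh; rw [Equiv.Perm.inv_eq_iff_eq]; exact (Fin.ext ha).symm
  have hsort : ∀ x y : Fin n,
      (if x < y then (x, y) else (y, x)) = (if y < x then (y, x) else (x, y)) := by
    intro x y
    rcases lt_trichotomy x y with h | h | h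
    · rw [if_pos h, if_neg (asymm h)]
    · subst h; simp
    · rw [if_neg (asymm h), if_pos h]
  have hbase : (statePerm n N C (j.1 + 1) a).1 < (statePerm n N C (j.1 + 1) b).1 := by
    rw [statePerm_succ]
    unfold sgen
    rw [dif_pos j.2]
    simp only [Fin.eta]
    rw [if_pos hjC]
    simp only [Equiv.Perm.mul_apply]
    have hA : statePerm n N C j.1 a = ⟨(N j).1 + 1, by have := (N j).2; omega⟩ := Fin.ext ha
    have hB : statePerm n N C j.1 b = ⟨(N j).1, by have := (N j).2; omega⟩ := Fin.ext hb
    simp only [hA, hB]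
    unfold adjT
    rw [Equiv.swap_apply_right, Equiv.swap_apply_left]
    simp
  intro u hu hum
  have hmain : ∀ u, j.1 + 1 ≤ u → u ≤ m →
      (statePerm n N C u a).1 < (statePerm n N C u b).1 := by
    intro u hu
    induction u, hu using Nat.le_induction with
    | base => intro _; exact hbase
    | succ u hu ih =>
      intro hum1
      have hord := ih (by omega)
      rcases order_flip N C u a b with hpres | ⟨h, hmem, hcase⟩
      · exact hpres.mpr hord
      · exfalso
        have hup : pairOf N C ⟨u, h⟩ = pairOf N C j := by
          unfold pairOf
          rw [hpl, hph]
          rcases hcase with ⟨hA, hB⟩ | ⟨hA, hB⟩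
          · have h1 : pLow n N C ⟨u, h⟩ = a := by
              unfold pLow; rw [Equiv.Perm.inv_eq_iff_eq]; exact (Fin.ext hA).symm
            have h2 : pHigh n N C ⟨u, h⟩ = b := by
              unfold pHigh; rw [Equiv.Perm.inv_eq_iff_eq]; exact (Fin.ext hB).symm
            rw [h1, h2]
            exact hsort a b
          · have h1 : pLow n N C ⟨u, h⟩ = b := by
              unfold pLow; rw [Equiv.Perm.inv_eq_iff_eq]; exact (Fin.ext hA).symm
            have h2 : pHigh n N C ⟨u, h⟩ = a := by
              unfold pHigh; rw [Equiv.Perm.inv_eq_iff_eq]; exact (Fin.ext hB).symm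
            rw [h1, h2]
        have heq := hinj (Finset.mem_coe.mpr hmem) (Finset.mem_coe.mpr hjC) hup
        have : u = j.1 := congrArg Fin.val heq
        omega
  exact hmain u hu hum

lemma statePerm_congr (C C' : Finset (Fin m)) (T : ℕ)
    (hagree : ∀ s : Fin m, s.1 < T → (s ∈ C ↔ s ∈ C')) :
    ∀ u ≤ T, statePerm n N C u = statePerm n N C' u := by
  intro u hu
  induction u with
  | zero => rfl
  | succ u ih =>
    rw [statePerm_succ, statePerm_succ, ih (by omega)]
    congr 1
    unfold sgen
    by_cases h : u < m
    · rw [dif_pos h, dif_pos h]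
      have hiff := hagree ⟨u, h⟩ (by show u < T; omega)
      by_cases h2 : (⟨u, h⟩ : Fin m) ∈ C
      · rw [if_pos h2, if_pos (hiff.mp h2)]
      · rw [if_neg h2, if_neg (fun hx => h2 (hiff.mpr hx))]
    · rw [dif_neg h, dif_neg h]

lemma count_contact (p : Fin n × Fin n) :
    Multiset.count p (contactMG n N C) =
      ((univ.filter (fun t : Fin m => t ∉ C)).filter
        (fun t => p = (arcSrc n N C t, arcTgt n N C t))).card := by
  rw [contactMG, Multiset.count_map]
  rw [Finset.filter_val]
  rfl

lemma aux_ne (C C' : Finset (Fin m)) (hC : IsArr n N C) (hC' : IsArr n N C')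
    (h : contactMG n N C = contactMG n N C') (j : Fin m) (hjC : j ∈ C) (hjC' : j ∉ C')
    (hlt : ∀ t : Fin m, t < j → (t ∈ C ↔ t ∈ C')) : False := by
  have hc := (N j).2
  have hP : ∀ u ≤ j.1, statePerm n N C u = statePerm n N C' u :=
    statePerm_congr N C C' j.1 (fun s hs => hlt s hs)
  set a : Fin n := (statePerm n N C j.1)⁻¹ ⟨(N j).1 + 1, by omega⟩ with hadef
  set b : Fin n := (statePerm n N C j.1)⁻¹ ⟨(N j).1, by omega⟩ with hbdef
  have ha : (statePerm n N C j.1 a).1 = (N j).1 + 1 := by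
    rw [hadef, ← Equiv.Perm.mul_apply, mul_inv_cancel, Equiv.Perm.one_apply]
  have hb : (statePerm n N C j.1 b).1 = (N j).1 := by
    rw [hbdef, ← Equiv.Perm.mul_apply, mul_inv_cancel, Equiv.Perm.one_apply]
  set S := (univ.filter (fun t : Fin m => t ∉ C)).filter
      (fun t => ((a, b) : Fin n × Fin n) = (arcSrc n N C t, arcTgt n N C t)) with hSdef
  set S' := (univ.filter (fun t : Fin m => t ∉ C')).filter
      (fun t => ((a, b) : Fin n × Fin n) = (arcSrc n N C' t, arcTgt n N C' t)) with hS'def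
  have hcard : S.card = S'.card := by
    rw [hSdef, hS'def, ← count_contact, ← count_contact, h]
  -- every element of S is < j
  have hSlt : ∀ t ∈ S, t < j := by
    intro t ht
    rw [hSdef, mem_filter, mem_filter] at ht
    obtain ⟨⟨-, hntC⟩, heq⟩ := ht
    have heq1 : a = arcSrc n N C t := (Prod.mk.injEq _ _ _ _ ▸ heq).1
    have heq2 : b = arcTgt n N C t := (Prod.mk.injEq _ _ _ _ ▸ heq).2
    have hA : (statePerm n N C (t.1 + 1) a).1 = (N t).1 + 1 := by
      rw [heq1, arcSrc, ← Equiv.Perm.mul_apply, mul_inv_cancel, Equiv.Perm.one_apply]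
    have hB : (statePerm n N C (t.1 + 1) b).1 = (N t).1 := by
      rw [heq2, arcTgt, ← Equiv.Perm.mul_apply, mul_inv_cancel, Equiv.Perm.one_apply]
    rcases lt_trichotomy t j with h1 | h1 | h1
    · exact h1
    · exact absurd (h1 ▸ hjC) hntC
    · exfalso
      have := after_flip N C hC j hjC a b ha hb (t.1 + 1)
        (by have : j.1 < t.1 := h1; omega) (by have := t.2; omega)
      omega
  -- S ⊆ S'
  have hSS' : S ⊆ S' := by
    intro t ht
    have htj := hSlt t ht
    rw [hSdef, mem_filter, mem_filter] at ht
    obtain ⟨⟨-, hntC⟩, heq⟩ := ht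
    have hstate : statePerm n N C (t.1 + 1) = statePerm n N C' (t.1 + 1) :=
      hP (t.1 + 1) (by have : t.1 < j.1 := htj; omega)
    have hsrc : arcSrc n N C t = arcSrc n N C' t := by
      rw [arcSrc, arcSrc, hstate]
    have htgt : arcTgt n N C t = arcTgt n N C' t := by
      rw [arcTgt, arcTgt, hstate]
    rw [hS'def, mem_filter, mem_filter]
    exact ⟨⟨mem_univ _, fun hx => hntC ((hlt t htj).mpr hx)⟩, by rw [← hsrc, ← htgt]; exact heq⟩
  -- j ∈ S'
  have hjS' : j ∈ S' := by
    have hstep : statePerm n N C' (j.1 + 1) = statePerm n N C' j.1 := by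
      rw [statePerm_succ]
      unfold sgen
      rw [dif_pos j.2]
      simp only [Fin.eta]
      rw [if_neg hjC', one_mul]
    have hPj : statePerm n N C j.1 = statePerm n N C' j.1 := hP j.1 le_rfl
    rw [hS'def, mem_filter, mem_filter]
    refine ⟨⟨mem_univ _, hjC'⟩, ?_⟩
    have h1 : arcSrc n N C' j = a := by
      rw [arcSrc, hstep, ← hPj]
    have h2 : arcTgt n N C' j = b := by
      rw [arcTgt, hstep, ← hPj]
    rw [h1, h2]
  have hjS : j ∉ S := by
    intro hx
    exact absurd rfl (ne_of_lt (hSlt j hx))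
  have : S.card + 1 ≤ S'.card := by
    have hins : insert j S ⊆ S' := Finset.insert_subset hjS' hSS'
    have := Finset.card_le_card hins
    rw [Finset.card_insert_of_notMem hjS] at this
    omega
  omega


/-- Let `N` be a sorting network with `n` levels.  If two pseudoline
arrangements supported by `N` have equal contact graphs (as directed multigraphs on the
labeled vertex set `{1,…,n}`), then they are equal. -/
theorem arrangement_eq_of_contactGraph_eq (n m : ℕ) (N : Fin m → Fin (n - 1))
    (C C' : Finset (Fin m)) (hC : IsArr n N C) (hC' : IsArr n N C')
    (h : contactMG n N C = contactMG n N C') : C = C' := by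
  by_contra hne
  have hD : ((C \ C') ∪ (C' \ C)).Nonempty := by
    rw [Finset.nonempty_iff_ne_empty]
    intro hemp
    rw [Finset.union_eq_empty, Finset.sdiff_eq_empty_iff_subset,
      Finset.sdiff_eq_empty_iff_subset] at hemp
    exact hne (Finset.Subset.antisymm hemp.1 hemp.2)
  set j := ((C \ C') ∪ (C' \ C)).min' hD with hjdef
  have hjmem := Finset.min'_mem ((C \ C') ∪ (C' \ C)) hD
  have hlt : ∀ t : Fin m, t < j → (t ∈ C ↔ t ∈ C') := by
    intro t ht
    by_contra hx
    have htD : t ∈ (C \ C') ∪ (C' \ C) := by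
      rw [Finset.mem_union, Finset.mem_sdiff, Finset.mem_sdiff]
      tauto
    exact absurd (Finset.min'_le _ t htD) (not_le.mpr ht)
  rw [Finset.mem_union, Finset.mem_sdiff, Finset.mem_sdiff] at hjmem
  rcases hjmem with ⟨h1, h2⟩ | ⟨h1, h2⟩
  · exact aux_ne N C C' hC hC' h j h1 h2 hlt
  · exact aux_ne N C' C hC' hC h.symm j h1 h2 (fun t ht => (hlt t ht).symm)


end BrickP
end

section
/- The brick polytope of an irreducible sorting network with n levels has dimension n−1. More generally, the brick polytope of a sorting network with n levels and p irreducible components has dimension n−p. -/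
open Finset
open scoped Classical Pointwise

namespace BrickP

/-! ### Auxiliary development -/

section Aux

variable {n m : ℕ}

theorem Equiv.Perm.apply_inv_self {α : Type*} (f : Equiv.Perm α) (x : α) : f (f⁻¹ x) = x :=
  f.apply_symm_apply x

theorem Equiv.Perm.inv_apply_self {α : Type*} (f : Equiv.Perm α) (x : α) : f⁻¹ (f x) = x :=
  f.symm_apply_apply x

/-- Bottom level of a commutator, as an element of `Fin n`. -/
def lA (n : ℕ) (i : Fin (n - 1)) : Fin n := ⟨i.1, by have := i.2; omega⟩
/-- Top level of a commutator, as an element of `Fin n`. -/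
def lB (n : ℕ) (i : Fin (n - 1)) : Fin n := ⟨i.1 + 1, by have := i.2; omega⟩

lemma adjT_def (i : Fin (n - 1)) : adjT n i = Equiv.swap (lA n i) (lB n i) := rfl

lemma lA_ne_lB (i : Fin (n - 1)) : lA n i ≠ lB n i := by
  simp [lA, lB, Fin.ext_iff]

lemma adjT_val (i : Fin (n - 1)) (x : Fin n) :
    ((adjT n i) x).1 = if x.1 = i.1 then i.1 + 1 else if x.1 = i.1 + 1 then i.1 else x.1 := by
  rw [adjT_def, Equiv.swap_apply_def]
  rcases eq_or_ne x (lA n i) with h | h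
  · subst h; simp [lA, lB]
  · rcases eq_or_ne x (lB n i) with h2 | h2
    · subst h2
      rw [if_neg (Ne.symm (lA_ne_lB i)), if_pos rfl]
      simp [lA, lB]
    · have hv : x.1 ≠ i.1 := fun hh => h (Fin.ext hh)
      have hv2 : x.1 ≠ i.1 + 1 := fun hh => h2 (Fin.ext hh)
      simp [h, h2, hv, hv2]

lemma adjT_inv (i : Fin (n - 1)) : (adjT n i)⁻¹ = adjT n i := by
  rw [adjT_def]; exact Equiv.swap_inv _ _

lemma adjT_lA (i : Fin (n - 1)) : (adjT n i) (lA n i) = lB n i := by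
  rw [adjT_def]; exact Equiv.swap_apply_left _ _

lemma adjT_lB (i : Fin (n - 1)) : (adjT n i) (lB n i) = lA n i := by
  rw [adjT_def]; exact Equiv.swap_apply_right _ _

lemma adjT_mul_eq (i : Fin (n - 1)) (w : Equiv.Perm (Fin n)) :
    adjT n i * w = w * Equiv.swap (w⁻¹ (lA n i)) (w⁻¹ (lB n i)) := by
  have h := Equiv.swap_apply_apply w (w⁻¹ (lA n i)) (w⁻¹ (lB n i))
  simp only [Equiv.Perm.apply_inv_self] at h
  rw [adjT_def, h]; group

/-! #### statePerm basics -/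

lemma sp_zero (N : Fin m → Fin (n - 1)) (C : Finset (Fin m)) : statePerm n N C 0 = 1 := rfl

lemma sp_succ (N : Fin m → Fin (n - 1)) (C : Finset (Fin m)) (t : ℕ) :
    statePerm n N C (t + 1) =
      (if h : t < m then (if (⟨t, h⟩ : Fin m) ∈ C then adjT n (N ⟨t, h⟩) else 1) else 1) *
        statePerm n N C t := rfl

lemma sp_window (N : Fin m → Fin (n - 1)) (C C' : Finset (Fin m)) (σ : Equiv.Perm (Fin n))
    {t₀ t₁ : ℕ} (h : t₀ ≤ t₁)
    (hmem : ∀ j : Fin m, t₀ ≤ j.1 → j.1 < t₁ → (j ∈ C ↔ j ∈ C'))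
    (hbase : statePerm n N C t₀ = statePerm n N C' t₀ * σ) :
    statePerm n N C t₁ = statePerm n N C' t₁ * σ := by
  induction t₁ with
  | zero =>
    have ht0 : t₀ = 0 := by omega
    subst ht0; exact hbase
  | succ t ih =>
    rcases Nat.lt_or_ge t₀ (t+1) with hlt | hge
    · have ht : t₀ ≤ t := by omega
      have ih' := ih ht (fun j hj1 hj2 => hmem j hj1 (by omega))
      rw [sp_succ, sp_succ, ih']
      by_cases hm : t < m
      · rw [dif_pos hm, dif_pos hm]
        by_cases hmC : (⟨t, hm⟩ : Fin m) ∈ C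
        · rw [if_pos hmC, if_pos ((hmem ⟨t, hm⟩ ht (by simp)).mp hmC), mul_assoc]
        · rw [if_neg hmC, if_neg (fun hc => hmC ((hmem ⟨t, hm⟩ ht (by simp)).mpr hc)), mul_assoc]
      · rw [dif_neg hm, dif_neg hm, mul_assoc]
    · have : t₀ = t + 1 := by omega
      subst this; exact hbase

lemma sp_stable (N : Fin m → Fin (n - 1)) (C : Finset (Fin m)) {t : ℕ} (h : m ≤ t) :
    statePerm n N C t = statePerm n N C m := by
  induction t with
  | zero => have : m = 0 := by omega
            subst this; rfl
  | succ t ih =>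
    rcases Nat.lt_or_ge t m with hlt | hge
    · have : m = t + 1 := by omega
      subst this; rfl
    · rw [sp_succ, dif_neg (by omega), one_mul, ih hge]

/-! #### The `IsArr`–`statePerm` bridge -/

lemma filter_split (C : Finset (Fin m)) (t : ℕ) :
    ∀ (l : List (Fin m)), l.Pairwise (· < ·) →
      (l.filter (fun j => (decide (j ∈ C) && decide (j.1 < t + 1)))) =
        (l.filter fun j => (decide (j ∈ C) && decide (j.1 < t))) ++
          (l.filter fun j => (decide (j ∈ C) && decide (j.1 = t))) := by
  intro l hl
  induction l with
  | nil => simp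
  | cons a l ih =>
    have ha : ∀ b ∈ l, a < b := fun b hb => (List.pairwise_cons.mp hl).1 b hb
    have ihl := ih (List.pairwise_cons.mp hl).2
    have hvlt : (a : Fin m) ∈ C → a.1 < t + 1 → ((decide (a ∈ C) && decide (a.1 < t + 1)) = true) := by
      intro h1 h2; simp [h1, h2]
    rcases Nat.lt_trichotomy a.1 t with hat | hat | hat
    · by_cases haC : a ∈ C
      · simp only [List.filter_cons]
        rw [if_pos (by simp [haC]; omega), if_pos (by simp [haC, hat]),
          if_neg (by simp [haC]; omega)]
        rw [ihl]; simp
      · simp only [List.filter_cons]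
        rw [if_neg (by simp [haC]), if_neg (by simp [haC]), if_neg (by simp [haC])]
        exact ihl
    · -- a.1 = t : every later element exceeds t
      have hgt : ∀ b ∈ l, t < b.1 := fun b hb => by
        have : a.1 < b.1 := ha b hb; omega
      have hl1 : l.filter (fun j => (decide (j ∈ C) && decide (j.1 < t))) = [] :=
        List.filter_eq_nil_iff.mpr (fun b hb => by
          have := hgt b hb; simp only [Bool.and_eq_true, decide_eq_true_eq]
          rintro ⟨-, hbt⟩; omega)
      have hl2 : l.filter (fun j => (decide (j ∈ C) && decide (j.1 = t))) = [] :=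
        List.filter_eq_nil_iff.mpr (fun b hb => by
          have := hgt b hb; simp only [Bool.and_eq_true, decide_eq_true_eq]
          rintro ⟨-, hbt⟩; omega)
      have hl3 : l.filter (fun j => (decide (j ∈ C) && decide (j.1 < t + 1))) = [] :=
        List.filter_eq_nil_iff.mpr (fun b hb => by
          have := hgt b hb; simp only [Bool.and_eq_true, decide_eq_true_eq]
          rintro ⟨-, hbt⟩; omega)
      by_cases haC : a ∈ C
      · simp only [List.filter_cons]
        rw [if_pos (by simp [haC]; omega), if_neg (by simp [haC]; omega),
          if_pos (by simp [haC, hat])]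
        rw [hl1, hl2, hl3]; simp
      · simp only [List.filter_cons]
        rw [if_neg (by simp [haC]), if_neg (by simp [haC]), if_neg (by simp [haC])]
        rw [hl1, hl2, hl3]; simp
    · simp only [List.filter_cons]
      rw [if_neg (by simp; omega), if_neg (by simp; omega), if_neg (by simp; omega)]
      exact ihl

lemma filter_eq_singleton {α : Type*} [DecidableEq α] (jt : α) :
    ∀ (l : List α), l.Nodup → jt ∈ l → l.filter (fun j => decide (j = jt)) = [jt] := by
  intro l
  induction l with
  | nil => simp
  | cons a l ih =>
    intro hnd hmem
    rcases eq_or_ne a jt with rfl | hne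
    · have hnotin : a ∉ l := (List.nodup_cons.mp hnd).1
      have : l.filter (fun j => decide (j = a)) = [] :=
        List.filter_eq_nil_iff.mpr (fun b hb => by
          simp only [decide_eq_true_eq]; rintro rfl; exact hnotin hb)
      simp [List.filter_cons, this]
    · have hmem' : jt ∈ l := by
        rcases List.mem_cons.mp hmem with h | h
        · exact absurd h.symm hne
        · exact h
      rw [List.filter_cons, if_neg (by simp [hne])]
      exact ih (List.nodup_cons.mp hnd).2 hmem'

lemma filter_eq_t (C : Finset (Fin m)) (t : ℕ) :
    ((List.finRange m).filter fun j => (decide (j ∈ C) && decide (j.1 = t))) =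
      if h : t < m then (if (⟨t, h⟩ : Fin m) ∈ C then [(⟨t, h⟩ : Fin m)] else []) else [] := by
  by_cases h : t < m
  · rw [dif_pos h]
    by_cases hC : (⟨t, h⟩ : Fin m) ∈ C
    · rw [if_pos hC]
      have hcongr : ((List.finRange m).filter fun j => (decide (j ∈ C) && decide (j.1 = t))) =
          ((List.finRange m).filter fun j => decide (j = (⟨t, h⟩ : Fin m))) := by
        apply List.filter_congr
        intro j _
        rcases eq_or_ne j (⟨t, h⟩ : Fin m) with rfl | hne
        · simp [hC]
        · have hv : j.1 ≠ t := fun hh => hne (Fin.ext hh)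
          simp [hv, hne]
      rw [hcongr]
      exact filter_eq_singleton _ _ (List.nodup_finRange m) (List.mem_finRange _)
    · rw [if_neg hC]
      exact List.filter_eq_nil_iff.mpr (fun j _ => by
        simp only [Bool.and_eq_true, decide_eq_true_eq]; rintro ⟨hj, hjt⟩
        exact hC (by have : j = ⟨t, h⟩ := Fin.ext hjt; rwa [this] at hj))
  · rw [dif_neg h]
    exact List.filter_eq_nil_iff.mpr (fun j _ => by
      simp only [Bool.and_eq_true, decide_eq_true_eq]; rintro ⟨-, hjt⟩; exact h (hjt ▸ j.2))

lemma sp_eq_revProd (N : Fin m → Fin (n - 1)) (C : Finset (Fin m)) (t : ℕ) :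
    statePerm n N C t =
      ((((List.finRange m).filter fun j => (decide (j ∈ C) && decide (j.1 < t))).map
        (fun j => adjT n (N j))).reverse).prod := by
  induction t with
  | zero =>
    have : ((List.finRange m).filter fun j => (decide (j ∈ C) && decide (j.1 < 0))) = [] :=
      List.filter_eq_nil_iff.mpr (fun j _ => by simp)
    simp [this, sp_zero]
  | succ t ih =>
    rw [filter_split C t _ (List.pairwise_lt_finRange m), filter_eq_t, sp_succ, ih]
    by_cases h : t < m
    · rw [dif_pos h, dif_pos h]
      by_cases hC : (⟨t, h⟩ : Fin m) ∈ C
      · rw [if_pos hC, if_pos hC]; simp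
      · rw [if_neg hC, if_neg hC]; simp
    · rw [dif_neg h, dif_neg h]; simp

lemma isArr_iff_sp (N : Fin m → Fin (n - 1)) (C : Finset (Fin m)) :
    IsArr n N C ↔ C.card = n.choose 2 ∧ statePerm n N C m = w0 n := by
  have hw0sq : w0 n * w0 n = 1 := by
    ext x
    simp [w0, Equiv.Perm.mul_apply, Fin.rev_rev]
  have hw0 : (w0 n)⁻¹ = w0 n := inv_eq_of_mul_eq_one_left hw0sq
  have hfl : ((List.finRange m).filter fun j => (decide (j ∈ C) && decide (j.1 < m))) =
      ((List.finRange m).filter fun j => decide (j ∈ C)) := by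
    apply List.filter_congr
    intro j _; simp [j.2]
  have hsp : statePerm n N C m =
      ((((List.finRange m).filter fun j => decide (j ∈ C)).map (fun j => adjT n (N j))).prod)⁻¹ := by
    rw [sp_eq_revProd, hfl]
    set L := (((List.finRange m).filter fun j => decide (j ∈ C)).map (fun j => adjT n (N j))) with hL
    have hLinv : L.map (fun x => x⁻¹) = L := by
      rw [hL, List.map_map]
      apply List.map_congr_left
      intro j _
      simp [Function.comp, adjT_inv]
    rw [List.prod_inv_reverse, hLinv]
  have hIA : (((List.finRange m).filter (fun j => j ∈ C)).map (fun j => adjT n (N j))).prod =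
      (((List.finRange m).filter fun j => decide (j ∈ C)).map (fun j => adjT n (N j))).prod := rfl
  unfold IsArr
  rw [hIA]
  constructor
  · rintro ⟨h1, h2⟩
    refine ⟨h1, ?_⟩
    rw [hsp, h2, hw0]
  · rintro ⟨h1, h2⟩
    refine ⟨h1, ?_⟩
    rw [hsp] at h2
    have h3 := congrArg (·⁻¹) h2
    simp only [inv_inv] at h3
    rw [h3, hw0]

end Aux
section Inversions

variable {n m : ℕ}

/-- The set of inversions of a permutation of `Fin n`. -/
def InvSet (n : ℕ) (w : Equiv.Perm (Fin n)) : Finset (Fin n × Fin n) :=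
  univ.filter (fun p => p.1.1 < p.2.1 ∧ (w p.2).1 < (w p.1).1)

/-- The number of inversions. -/
def nInv (n : ℕ) (w : Equiv.Perm (Fin n)) : ℕ := (InvSet n w).card

lemma nInv_one : nInv n 1 = 0 := by
  unfold nInv InvSet
  rw [Finset.card_eq_zero]
  ext p
  simp only [mem_filter, mem_univ, true_and, Finset.notMem_empty, iff_false, not_and]
  intro h
  simp only [Equiv.Perm.one_apply]
  omega

lemma card_filter_val_lt (k : ℕ) (hk : k ≤ n) :
    (univ.filter (fun a : Fin n => a.1 < k)).card = k := by
  have h : (univ.filter (fun a : Fin n => a.1 < k)).card = (Finset.range k).card := by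
    apply Finset.card_bij (fun a _ => a.1)
    · intro a ha
      simp only [mem_filter] at ha
      simp [ha.2]
    · intro a _ b _ h; exact Fin.ext h
    · intro x hx
      simp only [Finset.mem_range] at hx
      refine ⟨⟨x, by omega⟩, ?_, rfl⟩
      simp [hx]
  rw [h, Finset.card_range]

lemma card_lt_pairs : (univ.filter (fun p : Fin n × Fin n => p.1.1 < p.2.1)).card = n.choose 2 := by
  rw [Finset.card_eq_sum_card_fiberwise (f := Prod.snd) (t := univ) (fun x _ => mem_univ _)]
  have hfib : ∀ b : Fin n,
      ((univ.filter (fun p : Fin n × Fin n => p.1.1 < p.2.1)).filter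
        (fun p => p.2 = b)).card = b.1 := by
    intro b
    rw [← card_filter_val_lt (n := n) b.1 (le_of_lt b.2)]
    apply Finset.card_bij (fun p _ => p.1)
    · intro p hp
      simp only [mem_filter, mem_univ, true_and] at hp ⊢
      rcases hp with ⟨h1, rfl⟩; exact h1
    · intro p hp q hq h
      simp only [mem_filter, mem_univ, true_and] at hp hq
      exact Prod.ext h (hp.2.trans hq.2.symm)
    · intro a ha
      simp only [mem_filter, mem_univ, true_and] at ha
      refine ⟨(a, b), ?_, rfl⟩
      simp only [mem_filter, mem_univ, true_and]
      exact ⟨ha, trivial⟩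
  rw [Finset.sum_congr rfl (fun b _ => hfib b)]
  rw [Fin.sum_univ_eq_sum_range (fun i => i)]
  have h2 := Finset.sum_range_id_mul_two n
  rw [Nat.choose_two_right]
  omega

lemma w0_val (x : Fin n) : (w0 n x).1 = n - 1 - x.1 := by
  simp only [w0, Fin.revPerm_apply, Fin.val_rev]
  omega

lemma nInv_w0 : nInv n (w0 n) = n.choose 2 := by
  unfold nInv InvSet
  rw [← card_lt_pairs]
  congr 1
  ext p
  simp only [mem_filter, mem_univ, true_and, and_iff_left_iff_imp]
  intro h
  rw [w0_val, w0_val]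
  have := p.1.2; have := p.2.2
  omega

lemma adjT_lt_iff (i : Fin (n - 1)) {a b : Fin n}
    (h1 : ¬(a = lA n i ∧ b = lB n i)) (h2 : ¬(a = lB n i ∧ b = lA n i)) :
    (((adjT n i) a).1 < ((adjT n i) b).1 ↔ a.1 < b.1) := by
  rw [adjT_val, adjT_val]
  have hi := i.2
  have h1' : ¬(a.1 = i.1 ∧ b.1 = i.1 + 1) := by
    rintro ⟨x, y⟩; exact h1 ⟨Fin.ext x, Fin.ext y⟩
  have h2' : ¬(a.1 = i.1 + 1 ∧ b.1 = i.1) := by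
    rintro ⟨x, y⟩; exact h2 ⟨Fin.ext x, Fin.ext y⟩
  split_ifs <;> omega

lemma mem_invSet (w : Equiv.Perm (Fin n)) (x y : Fin n) :
    ((x, y) ∈ InvSet n w) ↔ (x.1 < y.1 ∧ (w y).1 < (w x).1) := by
  simp [InvSet]

lemma invSet_mul_pos (i : Fin (n - 1)) (w : Equiv.Perm (Fin n))
    (h : (w⁻¹ (lA n i)).1 < (w⁻¹ (lB n i)).1) :
    InvSet n (adjT n i * w) = insert (w⁻¹ (lA n i), w⁻¹ (lB n i)) (InvSet n w) ∧
      (w⁻¹ (lA n i), w⁻¹ (lB n i)) ∉ InvSet n w := by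
  set u := w⁻¹ (lA n i) with hu
  set v := w⁻¹ (lB n i) with hv
  have hwu : w u = lA n i := Equiv.Perm.apply_inv_self w _
  have hwv : w v = lB n i := Equiv.Perm.apply_inv_self w _
  have hAB : (lA n i).1 < (lB n i).1 := by simp [lA, lB]
  have hnotmem : (u, v) ∉ InvSet n w := by
    rw [mem_invSet, hwu, hwv]
    intro hc; omega
  refine ⟨?_, hnotmem⟩
  ext p
  obtain ⟨x, y⟩ := p
  simp only [Finset.mem_insert, mem_invSet, Prod.mk.injEq]
  have happ : ∀ z : Fin n, (adjT n i * w) z = adjT n i (w z) := fun _ => rfl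
  by_cases hs1 : x = u ∧ y = v
  · obtain ⟨rfl, rfl⟩ := hs1
    rw [happ, happ, hwu, hwv, adjT_lA, adjT_lB]
    constructor
    · intro _; exact Or.inl ⟨rfl, rfl⟩
    · intro _; exact ⟨h, hAB⟩
  · by_cases hs2 : x = v ∧ y = u
    · obtain ⟨rfl, rfl⟩ := hs2
      rw [happ, happ, hwu, hwv, adjT_lA, adjT_lB]
      constructor
      · rintro ⟨h1, -⟩; omega
      · rintro (⟨h1, -⟩ | ⟨h1, -⟩)
        · have := congrArg Fin.val h1; omega
        · omega
    · have hne1 : ¬(w y = lA n i ∧ w x = lB n i) := by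
        rintro ⟨ha, hb⟩
        exact hs2 ⟨by rw [hv, ← hb, Equiv.Perm.inv_apply_self],
          by rw [hu, ← ha, Equiv.Perm.inv_apply_self]⟩
      have hne2 : ¬(w y = lB n i ∧ w x = lA n i) := by
        rintro ⟨ha, hb⟩
        exact hs1 ⟨by rw [hu, ← hb, Equiv.Perm.inv_apply_self],
          by rw [hv, ← ha, Equiv.Perm.inv_apply_self]⟩
      rw [happ, happ, adjT_lt_iff i hne1 hne2]
      constructor
      · intro hc; exact Or.inr hc
      · rintro (hc | hc)
        · exact absurd hc hs1
        · exact hc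

lemma invSet_mul_neg (i : Fin (n - 1)) (w : Equiv.Perm (Fin n))
    (h : (w⁻¹ (lB n i)).1 < (w⁻¹ (lA n i)).1) :
    InvSet n (adjT n i * w) = (InvSet n w).erase (w⁻¹ (lB n i), w⁻¹ (lA n i)) ∧
      (w⁻¹ (lB n i), w⁻¹ (lA n i)) ∈ InvSet n w := by
  set u := w⁻¹ (lA n i) with hu
  set v := w⁻¹ (lB n i) with hv
  have hwu : w u = lA n i := Equiv.Perm.apply_inv_self w _
  have hwv : w v = lB n i := Equiv.Perm.apply_inv_self w _
  have hAB : (lA n i).1 < (lB n i).1 := by simp [lA, lB]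
  have hmem : (v, u) ∈ InvSet n w := by
    rw [mem_invSet, hwu, hwv]
    exact ⟨h, hAB⟩
  refine ⟨?_, hmem⟩
  ext p
  obtain ⟨x, y⟩ := p
  simp only [Finset.mem_erase, mem_invSet, Ne, Prod.mk.injEq]
  have happ : ∀ z : Fin n, (adjT n i * w) z = adjT n i (w z) := fun _ => rfl
  by_cases hs1 : x = v ∧ y = u
  · obtain ⟨rfl, rfl⟩ := hs1
    rw [happ, happ, hwu, hwv, adjT_lA, adjT_lB]
    constructor
    · rintro ⟨-, hc⟩; omega
    · rintro ⟨hc, -⟩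
      exact absurd ⟨rfl, rfl⟩ hc
  · by_cases hs2 : x = u ∧ y = v
    · obtain ⟨rfl, rfl⟩ := hs2
      rw [happ, happ, hwu, hwv, adjT_lA, adjT_lB]
      constructor
      · rintro ⟨hc, -⟩; omega
      · rintro ⟨-, -, hc⟩; omega
    · have hne1 : ¬(w y = lA n i ∧ w x = lB n i) := by
        rintro ⟨ha, hb⟩
        exact hs1 ⟨by rw [hv, ← hb, Equiv.Perm.inv_apply_self],
          by rw [hu, ← ha, Equiv.Perm.inv_apply_self]⟩
      have hne2 : ¬(w y = lB n i ∧ w x = lA n i) := by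
        rintro ⟨ha, hb⟩
        exact hs2 ⟨by rw [hu, ← hb, Equiv.Perm.inv_apply_self],
          by rw [hv, ← ha, Equiv.Perm.inv_apply_self]⟩
      rw [happ, happ, adjT_lt_iff i hne1 hne2]
      constructor
      · intro hc
        refine ⟨?_, hc⟩
        rintro ⟨h1, h2⟩
        exact hs1 ⟨h1, h2⟩
      · rintro ⟨-, hc⟩; exact hc

lemma inv_pair_ne (i : Fin (n - 1)) (w : Equiv.Perm (Fin n)) :
    (w⁻¹ (lA n i)).1 ≠ (w⁻¹ (lB n i)).1 := by
  intro h
  have : w⁻¹ (lA n i) = w⁻¹ (lB n i) := Fin.ext h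
  exact lA_ne_lB i ((w⁻¹).injective.eq_iff.mp this)

lemma nInv_mul_pos (i : Fin (n - 1)) (w : Equiv.Perm (Fin n))
    (h : (w⁻¹ (lA n i)).1 < (w⁻¹ (lB n i)).1) :
    nInv n (adjT n i * w) = nInv n w + 1 := by
  obtain ⟨h1, h2⟩ := invSet_mul_pos i w h
  unfold nInv
  rw [h1, Finset.card_insert_of_notMem h2]

lemma nInv_mul_neg (i : Fin (n - 1)) (w : Equiv.Perm (Fin n))
    (h : (w⁻¹ (lB n i)).1 < (w⁻¹ (lA n i)).1) :
    nInv n (adjT n i * w) + 1 = nInv n w := by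
  obtain ⟨h1, h2⟩ := invSet_mul_neg i w h
  unfold nInv
  rw [h1, Finset.card_erase_of_mem h2]
  have : 1 ≤ (InvSet n w).card := Finset.card_pos.mpr ⟨_, h2⟩
  omega

lemma nInv_mul_bounds (i : Fin (n - 1)) (w : Equiv.Perm (Fin n)) :
    nInv n (adjT n i * w) ≤ nInv n w + 1 ∧ nInv n w ≤ nInv n (adjT n i * w) + 1 := by
  rcases Nat.lt_trichotomy (w⁻¹ (lA n i)).1 (w⁻¹ (lB n i)).1 with h | h | h
  · rw [nInv_mul_pos i w h]; omega
  · exact absurd h (inv_pair_ne i w)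
  · have := nInv_mul_neg i w h; omega

end Inversions
section Facets

variable {n m : ℕ}

/-- `C` is a reduced subword of the word `Q` with product `π`. -/
def Fac {n m : ℕ} (Q : Fin m → Fin (n - 1)) (π : Equiv.Perm (Fin n))
    (C : Finset (Fin m)) : Prop :=
  C.card = nInv n π ∧ statePerm n Q C m = π

lemma isArr_iff_fac (N : Fin m → Fin (n - 1)) (C : Finset (Fin m)) :
    IsArr n N C ↔ Fac N (w0 n) C := by
  rw [isArr_iff_sp, Fac, nInv_w0]

/-- Number of elements of `C` before time `t`. -/
def cnt {m : ℕ} (C : Finset (Fin m)) (t : ℕ) : ℕ := (C.filter (fun j => j.1 < t)).card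

lemma cnt_zero (C : Finset (Fin m)) : cnt C 0 = 0 := by
  simp [cnt]

lemma cnt_succ (C : Finset (Fin m)) (t : ℕ) (h : t < m) :
    cnt C (t + 1) = cnt C t + (if (⟨t, h⟩ : Fin m) ∈ C then 1 else 0) := by
  unfold cnt
  by_cases hC : (⟨t, h⟩ : Fin m) ∈ C
  · rw [if_pos hC]
    have : C.filter (fun j => j.1 < t + 1) = insert ⟨t, h⟩ (C.filter (fun j => j.1 < t)) := by
      ext j
      simp only [mem_filter, Finset.mem_insert]
      have hv : ((⟨t, h⟩ : Fin m) : ℕ) = t := rfl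
      constructor
      · rintro ⟨hj, hjt⟩
        rcases Nat.lt_or_ge j.1 t with h' | h'
        · exact Or.inr ⟨hj, h'⟩
        · exact Or.inl (Fin.ext (by rw [hv]; omega))
      · rintro (rfl | ⟨hj, hjt⟩)
        · exact ⟨hC, by rw [hv]; omega⟩
        · exact ⟨hj, by omega⟩
    rw [this, Finset.card_insert_of_notMem (by
      simp only [mem_filter, not_and]
      intro _
      simp)]
  · rw [if_neg hC]
    have : C.filter (fun j => j.1 < t + 1) = C.filter (fun j => j.1 < t) := by
      ext j
      simp only [mem_filter, and_congr_right_iff]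
      intro hj
      constructor
      · intro hjt
        rcases Nat.lt_or_ge j.1 t with h' | h'
        · exact h'
        · exact absurd hj (by
            have hjeq : j = ⟨t, h⟩ := Fin.ext (show j.1 = t by omega)
            rw [hjeq]; exact hC)
      · omega
    rw [this]
    omega

lemma cnt_succ_ge (C : Finset (Fin m)) (t : ℕ) (h : m ≤ t) : cnt C (t + 1) = cnt C t := by
  unfold cnt
  congr 1
  apply Finset.filter_congr
  intro j _
  have := j.2
  constructor <;> (intro; omega)

lemma cnt_full (C : Finset (Fin m)) : cnt C m = C.card := by
  unfold cnt
  rw [Finset.filter_true_of_mem (fun j _ => j.2)]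

lemma nInv_sp_window (Q : Fin m → Fin (n - 1)) (C : Finset (Fin m)) {t t' : ℕ} (h : t ≤ t') :
    nInv n (statePerm n Q C t') + cnt C t ≤ nInv n (statePerm n Q C t) + cnt C t' ∧
      nInv n (statePerm n Q C t) + cnt C t ≤ nInv n (statePerm n Q C t') + cnt C t' := by
  induction t' with
  | zero =>
    have ht0 : t = 0 := by omega
    subst ht0; omega
  | succ s ih =>
    rcases Nat.lt_or_ge t (s + 1) with hlt | hge
    · have hts : t ≤ s := by omega
      obtain ⟨ih1, ih2⟩ := ih hts
      by_cases hm : s < m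
      · rw [cnt_succ C s hm]
        by_cases hC : (⟨s, hm⟩ : Fin m) ∈ C
        · rw [if_pos hC]
          have hstep : statePerm n Q C (s + 1) = adjT n (Q ⟨s, hm⟩) * statePerm n Q C s := by
            rw [sp_succ, dif_pos hm, if_pos hC]
          obtain ⟨hb1, hb2⟩ := nInv_mul_bounds (Q ⟨s, hm⟩) (statePerm n Q C s)
          rw [hstep]
          omega
        · rw [if_neg hC]
          have hstep : statePerm n Q C (s + 1) = statePerm n Q C s := by
            rw [sp_succ, dif_pos hm, if_neg hC, one_mul]
          rw [hstep]
          omega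
      · have hstep : statePerm n Q C (s + 1) = statePerm n Q C s := by
          rw [sp_succ, dif_neg hm, one_mul]
        rw [hstep, cnt_succ_ge C s (by omega)]
        omega
    · have ht : t = s + 1 := by omega
      subst ht; omega

lemma fac_cnt {Q : Fin m → Fin (n - 1)} {π : Equiv.Perm (Fin n)} {C : Finset (Fin m)}
    (hC : Fac Q π C) {t : ℕ} (ht : t ≤ m) :
    nInv n (statePerm n Q C t) = cnt C t := by
  have h0 := (nInv_sp_window Q C (Nat.zero_le t)).1
  rw [sp_zero, nInv_one, cnt_zero] at h0
  have h1 := (nInv_sp_window Q C ht).1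
  rw [hC.2, ← hC.1, ← cnt_full] at h1
  omega

/-- At a crossing of a facet, the two lines enter in increasing order. -/
lemma fac_step {Q : Fin m → Fin (n - 1)} {π : Equiv.Perm (Fin n)} {C : Finset (Fin m)}
    (hC : Fac Q π C) {t : ℕ} (h : t < m) (hmem : (⟨t, h⟩ : Fin m) ∈ C) :
    ((statePerm n Q C t)⁻¹ (lA n (Q ⟨t, h⟩))).1 < ((statePerm n Q C t)⁻¹ (lB n (Q ⟨t, h⟩))).1 := by
  set w := statePerm n Q C t with hw
  rcases Nat.lt_trichotomy (w⁻¹ (lA n (Q ⟨t, h⟩))).1 (w⁻¹ (lB n (Q ⟨t, h⟩))).1 with hlt | heq | hgt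
  · exact hlt
  · exact absurd heq (inv_pair_ne _ w)
  · exfalso
    have hstep : statePerm n Q C (t + 1) = adjT n (Q ⟨t, h⟩) * w := by
      rw [sp_succ, dif_pos h, if_pos hmem]
    have hneg := nInv_mul_neg (Q ⟨t, h⟩) w hgt
    have e1 := fac_cnt hC (le_of_lt h)
    have e2 := fac_cnt hC (show t + 1 ≤ m by omega)
    rw [cnt_succ C t h, if_pos hmem] at e2
    rw [hstep] at e2
    rw [← hw] at e1
    omega

/-- The lines `x` and `y` cross at time `t`. -/
def crossingAt {n m : ℕ} (Q : Fin m → Fin (n - 1)) (C : Finset (Fin m)) (x y : Fin n)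
    (t : ℕ) : Prop :=
  ∃ h : t < m, (⟨t, h⟩ : Fin m) ∈ C ∧
    ((statePerm n Q C t x = lA n (Q ⟨t, h⟩) ∧ statePerm n Q C t y = lB n (Q ⟨t, h⟩)) ∨
     (statePerm n Q C t y = lA n (Q ⟨t, h⟩) ∧ statePerm n Q C t x = lB n (Q ⟨t, h⟩)))

lemma crossingAt_step {Q : Fin m → Fin (n - 1)} {C : Finset (Fin m)} {x y : Fin n} {t : ℕ}
    (hc : crossingAt Q C x y t) :
    statePerm n Q C (t + 1) = statePerm n Q C t * Equiv.swap x y := by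
  obtain ⟨h, hmem, hor⟩ := hc
  set w := statePerm n Q C t with hw
  have hstep : statePerm n Q C (t + 1) = adjT n (Q ⟨t, h⟩) * w := by
    rw [sp_succ, dif_pos h, if_pos hmem]
  rw [hstep, adjT_mul_eq]
  congr 1
  rcases hor with ⟨hx, hy⟩ | ⟨hy, hx⟩
  · rw [← hx, ← hy, Equiv.Perm.inv_apply_self, Equiv.Perm.inv_apply_self]
  · rw [← hx, ← hy, Equiv.Perm.inv_apply_self, Equiv.Perm.inv_apply_self,
      Equiv.swap_comm]

lemma order_change {Q : Fin m → Fin (n - 1)} {C : Finset (Fin m)} {x y : Fin n} {t : ℕ}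
    (h1 : (statePerm n Q C t x).1 < (statePerm n Q C t y).1)
    (h2 : (statePerm n Q C (t + 1) y).1 < (statePerm n Q C (t + 1) x).1) :
    ∃ h : t < m, (⟨t, h⟩ : Fin m) ∈ C ∧
      statePerm n Q C t x = lA n (Q ⟨t, h⟩) ∧ statePerm n Q C t y = lB n (Q ⟨t, h⟩) := by
  set w := statePerm n Q C t with hw
  by_cases hm : t < m
  · by_cases hC : (⟨t, hm⟩ : Fin m) ∈ C
    · have hstep : statePerm n Q C (t + 1) = adjT n (Q ⟨t, hm⟩) * w := by
        rw [sp_succ, dif_pos hm, if_pos hC]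
      set i := Q ⟨t, hm⟩ with hi
      refine ⟨hm, hC, ?_⟩
      by_cases hs1 : w x = lA n i ∧ w y = lB n i
      · exact hs1
      · exfalso
        by_cases hs2 : w x = lB n i ∧ w y = lA n i
        · obtain ⟨ha, hb⟩ := hs2
          rw [ha, hb] at h1
          have hAB : (lA n i).1 < (lB n i).1 := by simp [lA, lB]
          omega
        · rw [hstep] at h2
          have := (adjT_lt_iff i (a := w x) (b := w y)
            (fun hc => hs1 hc) (fun hc => hs2 ⟨hc.1, hc.2⟩)).mpr h1
          simp only [Equiv.Perm.mul_apply] at h2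
          omega
    · have hstep : statePerm n Q C (t + 1) = w := by
        rw [sp_succ, dif_pos hm, if_neg hC, one_mul]
      rw [hstep] at h2; omega
  · have hstep : statePerm n Q C (t + 1) = w := by
      rw [sp_succ, dif_neg hm, one_mul]
    rw [hstep] at h2; omega

lemma order_change_exists {Q : Fin m → Fin (n - 1)} {C : Finset (Fin m)} {x y : Fin n}
    {t₀ t₁ : ℕ} (h01 : t₀ ≤ t₁)
    (h1 : (statePerm n Q C t₀ x).1 < (statePerm n Q C t₀ y).1)
    (h2 : (statePerm n Q C t₁ y).1 < (statePerm n Q C t₁ x).1) :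
    ∃ t, t₀ ≤ t ∧ t < t₁ ∧ ∃ h : t < m, (⟨t, h⟩ : Fin m) ∈ C ∧
      statePerm n Q C t x = lA n (Q ⟨t, h⟩) ∧ statePerm n Q C t y = lB n (Q ⟨t, h⟩) := by
  induction t₁ with
  | zero =>
    have ht0 : t₀ = 0 := by omega
    subst ht0; omega
  | succ s ih =>
    rcases Nat.lt_or_ge t₀ (s + 1) with hlt | hge
    · have hts : t₀ ≤ s := by omega
      rcases Nat.lt_trichotomy (statePerm n Q C s x).1 (statePerm n Q C s y).1 with ho | ho | ho
      · obtain ⟨h, hC, hx, hy⟩ := order_change ho h2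
        exact ⟨s, hts, by omega, h, hC, hx, hy⟩
      · exfalso
        have : statePerm n Q C s x = statePerm n Q C s y := Fin.ext ho
        have hxy : x = y := (statePerm n Q C s).injective this
        subst hxy; omega
      · obtain ⟨t, ht1, ht2, h⟩ := ih hts ho
        exact ⟨t, ht1, by omega, h⟩
    · have ht : t₀ = s + 1 := by omega
      subst ht; omega

/-- In a facet (for `w0`), each pair of lines crosses exactly once. -/
lemma cross_exists {N : Fin m → Fin (n - 1)} {C : Finset (Fin m)} (hC : Fac N (w0 n) C)
    {x y : Fin n} (hxy : x.1 < y.1) :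
    ∃ t, ∃ h : t < m, (⟨t, h⟩ : Fin m) ∈ C ∧
      statePerm n N C t x = lA n (N ⟨t, h⟩) ∧ statePerm n N C t y = lB n (N ⟨t, h⟩) := by
  have h1 : (statePerm n N C 0 x).1 < (statePerm n N C 0 y).1 := by
    rw [sp_zero]; exact hxy
  have h2 : (statePerm n N C m y).1 < (statePerm n N C m x).1 := by
    rw [hC.2, w0_val, w0_val]
    have := x.2; have := y.2
    omega
  obtain ⟨t, -, -, h⟩ := order_change_exists (Nat.zero_le m) h1 h2
  exact ⟨t, h⟩

lemma cross_unique {N : Fin m → Fin (n - 1)} {C : Finset (Fin m)} (hC : Fac N (w0 n) C)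
    {x y : Fin n} {t t' : ℕ}
    (ht : crossingAt N C x y t) (ht' : crossingAt N C x y t') : t = t' := by
  classical
  -- the labelling map from crossings to ordered pairs
  set f : (j : Fin m) → j ∈ C → Fin n × Fin n := fun j _ =>
    ((statePerm n N C j.1)⁻¹ (lA n (N j)), (statePerm n N C j.1)⁻¹ (lB n (N j))) with hf
  have hmaps : ∀ (j : Fin m) (hj : j ∈ C),
      f j hj ∈ univ.filter (fun p : Fin n × Fin n => p.1.1 < p.2.1) := by
    intro j hj
    simp only [hf, mem_filter, mem_univ, true_and]
    exact fac_step hC j.2 (by rw [Fin.eta]; exact hj)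
  have hsurj : ∀ p ∈ univ.filter (fun p : Fin n × Fin n => p.1.1 < p.2.1),
      ∃ j, ∃ hj : j ∈ C, f j hj = p := by
    rintro ⟨a, b⟩ hp
    simp only [mem_filter, mem_univ, true_and] at hp
    obtain ⟨t'', h'', hmem, hxa, hyb⟩ := cross_exists hC hp
    refine ⟨⟨t'', h''⟩, hmem, ?_⟩
    simp only [hf, Prod.mk.injEq]
    constructor
    · rw [← hxa, Equiv.Perm.inv_apply_self]
    · rw [← hyb, Equiv.Perm.inv_apply_self]
  have hcard : C.card ≤ (univ.filter (fun p : Fin n × Fin n => p.1.1 < p.2.1)).card := by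
    rw [card_lt_pairs, hC.1, nInv_w0]
  have hinj := Finset.inj_on_of_surj_on_of_card_le f hmaps hsurj hcard
  -- both crossings give the same value of `f`
  obtain ⟨h, hmem, hor⟩ := ht
  obtain ⟨h', hmem', hor'⟩ := ht'
  have hval : ∀ (s : ℕ) (hs : s < m) (hsm : (⟨s, hs⟩ : Fin m) ∈ C),
      ((statePerm n N C s x = lA n (N ⟨s, hs⟩) ∧ statePerm n N C s y = lB n (N ⟨s, hs⟩)) ∨
       (statePerm n N C s y = lA n (N ⟨s, hs⟩) ∧ statePerm n N C s x = lB n (N ⟨s, hs⟩))) →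
      f ⟨s, hs⟩ hsm = (x, y) ∨ f ⟨s, hs⟩ hsm = (y, x) := by
    rintro s hs hsm (⟨ha, hb⟩ | ⟨ha, hb⟩)
    · left
      simp only [hf, Prod.mk.injEq]
      exact ⟨by rw [← ha, Equiv.Perm.inv_apply_self], by rw [← hb, Equiv.Perm.inv_apply_self]⟩
    · right
      simp only [hf, Prod.mk.injEq]
      exact ⟨by rw [← ha, Equiv.Perm.inv_apply_self], by rw [← hb, Equiv.Perm.inv_apply_self]⟩
  have hv1 := hval t h hmem hor
  have hv2 := hval t' h' hmem' hor'
  have hfe : f ⟨t, h⟩ hmem = f ⟨t', h'⟩ hmem' := by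
    rcases hv1 with he1 | he1 <;> rcases hv2 with he2 | he2
    · rw [he1, he2]
    · exfalso
      have p1 := hmaps ⟨t, h⟩ hmem
      have p2 := hmaps ⟨t', h'⟩ hmem'
      rw [he1] at p1; rw [he2] at p2
      simp only [mem_filter, mem_univ, true_and] at p1 p2
      omega
    · exfalso
      have p1 := hmaps ⟨t, h⟩ hmem
      have p2 := hmaps ⟨t', h'⟩ hmem'
      rw [he1] at p1; rw [he2] at p2
      simp only [mem_filter, mem_univ, true_and] at p1 p2
      omega
    · rw [he1, he2]
  have := hinj hmem hmem' hfe
  exact congrArg Fin.val this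

lemma order_persist {Q : Fin m → Fin (n - 1)} {C : Finset (Fin m)} {x y : Fin n}
    {s s' : ℕ} (h : s ≤ s')
    (h1 : (statePerm n Q C s x).1 < (statePerm n Q C s y).1)
    (hnc : ∀ t, s ≤ t → t < s' → ¬ crossingAt Q C x y t) :
    (statePerm n Q C s' x).1 < (statePerm n Q C s' y).1 := by
  by_contra hcon
  push_neg at hcon
  rcases Nat.lt_or_ge (statePerm n Q C s' x).1 (statePerm n Q C s' y).1 with hlt | hge
  · omega
  have hne : (statePerm n Q C s' x).1 ≠ (statePerm n Q C s' y).1 := by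
    intro he
    have hxy : x = y := (statePerm n Q C s').injective (Fin.ext he)
    subst hxy; omega
  have h2 : (statePerm n Q C s' y).1 < (statePerm n Q C s' x).1 := by omega
  obtain ⟨t, ht1, ht2, hm', hmem, ha, hb⟩ := order_change_exists h h1 h2
  exact hnc t ht1 ht2 ⟨hm', hmem, Or.inl ⟨ha, hb⟩⟩

/-- Level of line `i` moves by steps across commutators. -/
lemma sp_step_val (Q : Fin m → Fin (n - 1)) (C : Finset (Fin m)) (t : ℕ) (i : Fin n) :
    (statePerm n Q C (t + 1) i).1 = (statePerm n Q C t i).1 ∨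
      (∃ hm : t < m,
        ((Q ⟨t, hm⟩).1 = (statePerm n Q C t i).1 ∧
            (statePerm n Q C (t + 1) i).1 = (statePerm n Q C t i).1 + 1) ∨
        ((Q ⟨t, hm⟩).1 + 1 = (statePerm n Q C t i).1 ∧
            (statePerm n Q C (t + 1) i).1 + 1 = (statePerm n Q C t i).1)) := by
  by_cases hm : t < m
  · by_cases hC : (⟨t, hm⟩ : Fin m) ∈ C
    · have hstep : statePerm n Q C (t + 1) = adjT n (Q ⟨t, hm⟩) * statePerm n Q C t := by
        rw [sp_succ, dif_pos hm, if_pos hC]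
      rw [hstep]
      simp only [Equiv.Perm.mul_apply]
      rw [adjT_val]
      split_ifs with ha hb
      · exact Or.inr ⟨hm, Or.inl ⟨ha.symm, by omega⟩⟩
      · exact Or.inr ⟨hm, Or.inr ⟨by omega, by omega⟩⟩
      · exact Or.inl rfl
    · left
      rw [sp_succ, dif_pos hm, if_neg hC, one_mul]
  · left
    rw [sp_succ, dif_neg hm, one_mul]

lemma boundary_cross (Q : Fin m → Fin (n - 1)) (C : Finset (Fin m)) (i : Fin n) (L : ℕ)
    {t₀ t₁ : ℕ} (h : t₀ ≤ t₁)
    (hchange : ((statePerm n Q C t₀ i).1 ≤ L ∧ L < (statePerm n Q C t₁ i).1) ∨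
               (L < (statePerm n Q C t₀ i).1 ∧ (statePerm n Q C t₁ i).1 ≤ L)) :
    ∃ t, t₀ ≤ t ∧ t < t₁ ∧ ∃ hm : t < m, (Q ⟨t, hm⟩).1 = L := by
  induction t₁ with
  | zero =>
    have ht0 : t₀ = 0 := by omega
    subst ht0; omega
  | succ s ih =>
    rcases Nat.lt_or_ge t₀ (s + 1) with hlt | hge
    · have hts : t₀ ≤ s := by omega
      have hstep := sp_step_val Q C s i
      by_cases hside : (statePerm n Q C s i).1 ≤ L
      · rcases hchange with ⟨hc0, hc1⟩ | ⟨hc0, hc1⟩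
        · -- went from ≤ L at s to > L at s+1 : commutator at L at time s
          rcases hstep with he | ⟨hm, hcase⟩
          · obtain ⟨t, a, b, c⟩ := ih hts (Or.inl ⟨hc0, by omega⟩)
            exact ⟨t, a, by omega, c⟩
          · rcases hcase with ⟨hq, hv⟩ | ⟨hq, hv⟩
            · by_cases hL : (statePerm n Q C (s + 1) i).1 ≤ L
              · obtain ⟨t, a, b, c⟩ := ih hts (Or.inl ⟨hc0, by omega⟩)
                exact ⟨t, a, by omega, c⟩
              · exact ⟨s, hts, by omega, hm, by omega⟩
            · obtain ⟨t, a, b, c⟩ := ih hts (Or.inl ⟨hc0, by omega⟩)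
              exact ⟨t, a, by omega, c⟩
        · obtain ⟨t, a, b, c⟩ := ih hts (Or.inr ⟨hc0, hside⟩)
          exact ⟨t, a, by omega, c⟩
      · push_neg at hside
        rcases hchange with ⟨hc0, hc1⟩ | ⟨hc0, hc1⟩
        · obtain ⟨t, a, b, c⟩ := ih hts (Or.inl ⟨hc0, hside⟩)
          exact ⟨t, a, by omega, c⟩
        · -- went from > L at s to ≤ L at s+1
          rcases hstep with he | ⟨hm, hcase⟩
          · obtain ⟨t, a, b, c⟩ := ih hts (Or.inr ⟨hc0, by omega⟩)
            exact ⟨t, a, by omega, c⟩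
          · rcases hcase with ⟨hq, hv⟩ | ⟨hq, hv⟩
            · obtain ⟨t, a, b, c⟩ := ih hts (Or.inr ⟨hc0, by omega⟩)
              exact ⟨t, a, by omega, c⟩
            · by_cases hL : L < (statePerm n Q C (s + 1) i).1
              · obtain ⟨t, a, b, c⟩ := ih hts (Or.inr ⟨hc0, by omega⟩)
                exact ⟨t, a, by omega, c⟩
              · exact ⟨s, hts, by omega, hm, by omega⟩
    · have ht : t₀ = s + 1 := by omega
      subst ht; omega

end Facets
section FlipPrep

variable {n m : ℕ}

lemma sp_agree {Q : Fin m → Fin (n - 1)} {C C' : Finset (Fin m)} {s : ℕ}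
    (h : ∀ j : Fin m, j.1 < s → (j ∈ C ↔ j ∈ C')) :
    statePerm n Q C s = statePerm n Q C' s := by
  have := sp_window Q C C' 1 (Nat.zero_le s) (fun j _ h2 => h j h2)
    (by rw [sp_zero, sp_zero, mul_one])
  simpa using this

lemma sp_succ_mem (Q : Fin m → Fin (n - 1)) {C : Finset (Fin m)} {j : Fin m} (hj : j ∈ C) :
    statePerm n Q C (j.1 + 1) = adjT n (Q j) * statePerm n Q C j.1 := by
  rw [sp_succ, dif_pos j.2, if_pos hj]

lemma sp_succ_notmem (Q : Fin m → Fin (n - 1)) {C : Finset (Fin m)} {j : Fin m} (hj : j ∉ C) :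
    statePerm n Q C (j.1 + 1) = statePerm n Q C j.1 := by
  rw [sp_succ, dif_pos j.2, if_neg hj, one_mul]

lemma swap_eq_swap {α : Type*} [DecidableEq α] {a b c d : α} (hab : a ≠ b)
    (h : Equiv.swap a b = Equiv.swap c d) : (a = c ∧ b = d) ∨ (a = d ∧ b = c) := by
  have ha : Equiv.swap c d a = b := by rw [← h]; exact Equiv.swap_apply_left a b
  by_cases hac : a = c
  · subst hac
    rw [Equiv.swap_apply_left] at ha
    exact Or.inl ⟨rfl, ha.symm⟩
  · by_cases had : a = d
    · subst had
      rw [Equiv.swap_apply_right] at ha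
      exact Or.inr ⟨rfl, ha.symm⟩
    · rw [Equiv.swap_apply_of_ne_of_ne hac had] at ha
      exact absurd ha hab

lemma arcRel_connRel {N : Fin m → Fin (n - 1)} {C : Finset (Fin m)} {u v : Fin n}
    (h : ArcRel n N C u v) : ConnRel n N C u v :=
  Relation.ReflTransGen.single (Or.inl h)

lemma arcRel_connRel' {N : Fin m → Fin (n - 1)} {C : Finset (Fin m)} {u v : Fin n}
    (h : ArcRel n N C u v) : ConnRel n N C v u :=
  Relation.ReflTransGen.single (Or.inr h)

lemma connRel_symm {N : Fin m → Fin (n - 1)} {C : Finset (Fin m)} :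
    Symmetric (ConnRel n N C) :=
  fun a b h => (@Relation.ReflTransGen.stdSymm _ _ ⟨fun _ _ h => Or.symm h⟩).symm a b h

lemma connRel_trans {N : Fin m → Fin (n - 1)} {C : Finset (Fin m)} {u v w : Fin n}
    (h1 : ConnRel n N C u v) (h2 : ConnRel n N C v w) : ConnRel n N C u w :=
  Relation.ReflTransGen.trans h1 h2

/-- Brick-vector change under a window twist by `swap x y`, with `x` above `y`. -/
lemma brick_delta (N : Fin m → Fin (n - 1)) (C C' : Finset (Fin m)) {x y : Fin n} (hxy : x ≠ y)
    (lo hi : ℕ)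
    (h_out : ∀ j : Fin m, ¬(lo ≤ j.1 ∧ j.1 < hi) →
      statePerm n N C' (j.1 + 1) = statePerm n N C (j.1 + 1))
    (h_in : ∀ j : Fin m, lo ≤ j.1 → j.1 < hi →
      statePerm n N C' (j.1 + 1) = statePerm n N C (j.1 + 1) * Equiv.swap x y)
    (h_ord : ∀ j : Fin m, lo ≤ j.1 → j.1 < hi →
      (statePerm n N C (j.1 + 1) y).1 < (statePerm n N C (j.1 + 1) x).1)
    (h_wit : ∃ j : Fin m, lo ≤ j.1 ∧ j.1 < hi ∧ IsBrick N j ∧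
      (statePerm n N C (j.1 + 1) y).1 ≤ (N j).1 ∧ (N j).1 < (statePerm n N C (j.1 + 1) x).1) :
    ∃ k : ℕ, 1 ≤ k ∧ ∀ i : Fin n,
      brickVector n N C' i = brickVector n N C i +
        k * ((if i = y then (1:ℝ) else 0) - (if i = x then (1:ℝ) else 0)) := by
  classical
  set W : Fin m → Prop := fun j => lo ≤ j.1 ∧ j.1 < hi with hW
  have habove_in : ∀ j : Fin m, W j → ∀ i : Fin n,
      (Above n N C' i j ↔ Above n N C (Equiv.swap x y i) j) := by
    intro j hj i
    unfold Above
    rw [h_in j hj.1 hj.2]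
    rfl
  have habove_out : ∀ j : Fin m, ¬ W j → ∀ i : Fin n,
      (Above n N C' i j ↔ Above n N C i j) := by
    intro j hj i
    unfold Above
    rw [h_out j hj]
  -- the finsets
  set A : Fin n → Finset (Fin m) :=
    fun i => univ.filter (fun j => IsBrick N j ∧ Above n N C i j) with hA
  set A' : Fin n → Finset (Fin m) :=
    fun i => univ.filter (fun j => IsBrick N j ∧ Above n N C' i j) with hA'
  have hbv : ∀ i, brickVector n N C i = ((A i).card : ℝ) := fun i => by
    rw [brickVector, hA]
  have hbv' : ∀ i, brickVector n N C' i = ((A' i).card : ℝ) := fun i => by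
    rw [brickVector, hA']
  set k := ((A x).filter (fun j => W j ∧ ¬ Above n N C y j)).card with hk
  -- key Finset identities
  have hsplit : ∀ (S : Finset (Fin m)), S.card =
      (S.filter W).card + (S.filter (fun j => ¬ W j)).card :=
    fun S => (Finset.card_filter_add_card_filter_not (s := S) W).symm
  have hAx_in : (A' x).filter W = (A y).filter W := by
    ext j
    simp only [hA, hA', Finset.mem_filter, Finset.mem_univ, true_and]
    constructor
    · rintro ⟨⟨hb, hab⟩, hw⟩
      rw [habove_in j hw x, Equiv.swap_apply_left] at hab
      exact ⟨⟨hb, hab⟩, hw⟩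
    · rintro ⟨⟨hb, hab⟩, hw⟩
      rw [habove_in j hw x, Equiv.swap_apply_left]
      exact ⟨⟨hb, hab⟩, hw⟩
  have hAy_in : (A' y).filter W = (A x).filter W := by
    ext j
    simp only [hA, hA', Finset.mem_filter, Finset.mem_univ, true_and]
    constructor
    · rintro ⟨⟨hb, hab⟩, hw⟩
      rw [habove_in j hw y, Equiv.swap_apply_right] at hab
      exact ⟨⟨hb, hab⟩, hw⟩
    · rintro ⟨⟨hb, hab⟩, hw⟩
      rw [habove_in j hw y, Equiv.swap_apply_right]
      exact ⟨⟨hb, hab⟩, hw⟩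
  have hout_eq : ∀ i, (A' i).filter (fun j => ¬ W j) = (A i).filter (fun j => ¬ W j) := by
    intro i
    ext j
    simp only [hA, hA', Finset.mem_filter, Finset.mem_univ, true_and]
    constructor
    · rintro ⟨⟨hb, hab⟩, hw⟩
      rw [habove_out j hw i] at hab
      exact ⟨⟨hb, hab⟩, hw⟩
    · rintro ⟨⟨hb, hab⟩, hw⟩
      rw [habove_out j hw i]
      exact ⟨⟨hb, hab⟩, hw⟩
  have hsub : ((A x).filter W).card = ((A y).filter W).card + k := by
    rw [hk]
    have h1 : ((A x).filter W).filter (fun j => Above n N C y j) = (A y).filter W := by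
      ext j
      simp only [hA, Finset.mem_filter, Finset.mem_univ, true_and]
      constructor
      · rintro ⟨⟨⟨hb, -⟩, hw⟩, hab⟩
        exact ⟨⟨hb, hab⟩, hw⟩
      · rintro ⟨⟨hb, hab⟩, hw⟩
        refine ⟨⟨⟨hb, ?_⟩, hw⟩, hab⟩
        have := h_ord j hw.1 hw.2
        unfold Above at hab ⊢
        omega
    have h2 : ((A x).filter W).filter (fun j => ¬ Above n N C y j) =
        (A x).filter (fun j => W j ∧ ¬ Above n N C y j) := by
      rw [Finset.filter_filter]
    have h3 := Finset.card_filter_add_card_filter_not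
      (s := (A x).filter W) (fun j => Above n N C y j)
    rw [h1, h2] at h3
    omega
  have hkx : (A' x).card + k = (A x).card := by
    rw [hsplit (A' x), hsplit (A x), hAx_in, hout_eq x]
    omega
  have hky : (A' y).card = (A y).card + k := by
    rw [hsplit (A' y), hsplit (A y), hAy_in, hout_eq y]
    omega
  have hko : ∀ i, i ≠ x → i ≠ y → (A' i).card = (A i).card := by
    intro i hix hiy
    have hin_eq : (A' i).filter W = (A i).filter W := by
      ext j
      simp only [hA, hA', Finset.mem_filter, Finset.mem_univ, true_and]
      constructor
      · rintro ⟨⟨hb, hab⟩, hw⟩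
        rw [habove_in j hw i, Equiv.swap_apply_of_ne_of_ne hix hiy] at hab
        exact ⟨⟨hb, hab⟩, hw⟩
      · rintro ⟨⟨hb, hab⟩, hw⟩
        rw [habove_in j hw i, Equiv.swap_apply_of_ne_of_ne hix hiy]
        exact ⟨⟨hb, hab⟩, hw⟩
    rw [hsplit (A' i), hsplit (A i), hin_eq, hout_eq i]
  have hk1 : 1 ≤ k := by
    obtain ⟨j, hjlo, hjhi, hjb, hjy, hjx⟩ := h_wit
    rw [hk]
    apply Finset.card_pos.mpr
    refine ⟨j, ?_⟩
    simp only [hA, Finset.mem_filter, Finset.mem_univ, true_and]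
    refine ⟨⟨hjb, ?_⟩, ⟨hjlo, hjhi⟩, ?_⟩ <;> unfold Above <;> omega
  refine ⟨k, hk1, ?_⟩
  intro i
  rcases eq_or_ne i x with rfl | hix
  · rw [if_neg hxy, if_pos rfl, hbv, hbv']
    have hcast : ((A' i).card : ℝ) + (k : ℝ) = ((A i).card : ℝ) := by exact_mod_cast hkx
    linarith
  · rcases eq_or_ne i y with rfl | hiy
    · rw [if_pos rfl, if_neg hix, hbv, hbv']
      have hcast : ((A' i).card : ℝ) = ((A i).card : ℝ) + (k : ℝ) := by exact_mod_cast hky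
      linarith
    · rw [if_neg hiy, if_neg hix, hbv, hbv', hko i hix hiy]
      ring

end FlipPrep
section Flip

variable {n m : ℕ}

lemma arcSrc_spec (N : Fin m → Fin (n - 1)) (C : Finset (Fin m)) (j : Fin m) :
    statePerm n N C (j.1 + 1) (arcSrc n N C j) = lB n (N j) :=
  Equiv.Perm.apply_inv_self _ _

lemma arcTgt_spec (N : Fin m → Fin (n - 1)) (C : Finset (Fin m)) (j : Fin m) :
    statePerm n N C (j.1 + 1) (arcTgt n N C j) = lA n (N j) :=
  Equiv.Perm.apply_inv_self _ _

lemma arcSrc_ne_arcTgt (N : Fin m → Fin (n - 1)) (C : Finset (Fin m)) (j : Fin m) :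
    arcSrc n N C j ≠ arcTgt n N C j := by
  intro h
  have h2 := arcSrc_spec N C j
  rw [h, arcTgt_spec] at h2
  exact lA_ne_lB (N j) h2

lemma flip_finish (N : Fin m → Fin (n - 1)) (C : Finset (Fin m)) (hC : Fac N (w0 n) C)
    (j₀ t₁ : Fin m) (hj : j₀ ∉ C) (ht₁ : t₁ ∈ C)
    (lo hi : ℕ)
    (hC' : Fac N (w0 n) (insert j₀ (C.erase t₁)))
    (hcross : crossingAt N C (arcSrc n N C j₀) (arcTgt n N C j₀) t₁.1)
    (h_out : ∀ j : Fin m, ¬(lo ≤ j.1 ∧ j.1 < hi) →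
      statePerm n N (insert j₀ (C.erase t₁)) (j.1 + 1) = statePerm n N C (j.1 + 1))
    (h_in : ∀ j : Fin m, lo ≤ j.1 → j.1 < hi →
      statePerm n N (insert j₀ (C.erase t₁)) (j.1 + 1) =
        statePerm n N C (j.1 + 1) * Equiv.swap (arcSrc n N C j₀) (arcTgt n N C j₀))
    (h_ord : ∀ j : Fin m, lo ≤ j.1 → j.1 < hi →
      (statePerm n N C (j.1 + 1) (arcTgt n N C j₀)).1 <
        (statePerm n N C (j.1 + 1) (arcSrc n N C j₀)).1)
    (h_wit : ∃ j : Fin m, lo ≤ j.1 ∧ j.1 < hi ∧ IsBrick N j ∧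
      (statePerm n N C (j.1 + 1) (arcTgt n N C j₀)).1 ≤ (N j).1 ∧
      (N j).1 < (statePerm n N C (j.1 + 1) (arcSrc n N C j₀)).1)
    (harcS : arcSrc n N (insert j₀ (C.erase t₁)) t₁ = arcTgt n N C j₀)
    (harcT : arcTgt n N (insert j₀ (C.erase t₁)) t₁ = arcSrc n N C j₀) :
    ∃ (C' : Finset (Fin m)) (t₁' : Fin m) (k : ℕ),
      Fac N (w0 n) C' ∧ t₁' ∈ C ∧ C' = insert j₀ (C.erase t₁') ∧ 1 ≤ k ∧
      (∀ i : Fin n, brickVector n N C' i = brickVector n N C i +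
        k * ((if i = arcTgt n N C j₀ then (1:ℝ) else 0) -
             (if i = arcSrc n N C j₀ then (1:ℝ) else 0))) ∧
      (∀ u v, ArcRel n N C' u v → ConnRel n N C u v) ∧
      (∀ u v, ArcRel n N C u v → ConnRel n N C' u v) ∧
      (∀ u : Fin m, u ∈ C → Fac N (w0 n) (insert j₀ (C.erase u)) → u = t₁') := by
  classical
  set a := arcSrc n N C j₀ with ha_def
  set b := arcTgt n N C j₀ with hb_def
  set τ := Equiv.swap a b with hτ
  set C' := insert j₀ (C.erase t₁) with hC'def
  have hab : a ≠ b := arcSrc_ne_arcTgt N C j₀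
  have hC'mem : ∀ j : Fin m, j ∈ C' ↔ (j = j₀ ∨ (j ∈ C ∧ j ≠ t₁)) := by
    intro j
    simp only [hC'def, Finset.mem_insert, Finset.mem_erase]
    tauto
  have ht₁j₀ : t₁ ≠ j₀ := fun he => hj (he ▸ ht₁)
  have ht₁C' : t₁ ∉ C' := by
    rw [hC'mem]
    push_neg
    exact ⟨ht₁j₀, fun _ => rfl⟩
  have hj₀C' : j₀ ∈ C' := by rw [hC'mem]; exact Or.inl rfl
  -- brick vector change
  obtain ⟨k, hk1, hkf⟩ := brick_delta N C C' hab lo hi h_out h_in h_ord h_wit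
  -- basic connectivity facts
  have hconn_ab : ConnRel n N C a b := arcRel_connRel ⟨j₀, hj, rfl, rfl⟩
  have hconn_ba : ConnRel n N C b a := arcRel_connRel' ⟨j₀, hj, rfl, rfl⟩
  have hconn'_ba : ConnRel n N C' b a := arcRel_connRel ⟨t₁, ht₁C', harcS, harcT⟩
  have hconn'_ab : ConnRel n N C' a b := arcRel_connRel' ⟨t₁, ht₁C', harcS, harcT⟩
  have htau_C : ∀ z, ConnRel n N C (τ z) z := by
    intro z
    rcases eq_or_ne z a with rfl | hza
    · rw [hτ, Equiv.swap_apply_left]; exact hconn_ba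
    · rcases eq_or_ne z b with rfl | hzb
      · rw [hτ, Equiv.swap_apply_right]; exact hconn_ab
      · rw [hτ, Equiv.swap_apply_of_ne_of_ne hza hzb]
        exact Relation.ReflTransGen.refl
  have htau_C' : ∀ z, ConnRel n N C' (τ z) z := by
    intro z
    rcases eq_or_ne z a with rfl | hza
    · rw [hτ, Equiv.swap_apply_left]; exact hconn'_ba
    · rcases eq_or_ne z b with rfl | hzb
      · rw [hτ, Equiv.swap_apply_right]; exact hconn'_ab
      · rw [hτ, Equiv.swap_apply_of_ne_of_ne hza hzb]
        exact Relation.ReflTransGen.refl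
  -- arc twisting
  have harc_twist : ∀ j : Fin m, lo ≤ j.1 → j.1 < hi →
      arcSrc n N C' j = τ (arcSrc n N C j) ∧ arcTgt n N C' j = τ (arcTgt n N C j) := by
    intro j h1 h2
    unfold arcSrc arcTgt
    rw [h_in j h1 h2]
    rw [mul_inv_rev]
    have hτinv : τ⁻¹ = τ := by rw [hτ]; exact Equiv.swap_inv a b
    constructor
    · rw [Equiv.Perm.mul_apply, hτinv]
    · rw [Equiv.Perm.mul_apply, hτinv]
  have harc_id : ∀ j : Fin m, ¬(lo ≤ j.1 ∧ j.1 < hi) →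
      arcSrc n N C' j = arcSrc n N C j ∧ arcTgt n N C' j = arcTgt n N C j := by
    intro j hcond
    unfold arcSrc arcTgt
    rw [h_out j hcond]
    exact ⟨rfl, rfl⟩
  -- direction 1 : arcs of C' are connections of C
  have hdir1 : ∀ u v, ArcRel n N C' u v → ConnRel n N C u v := by
    rintro u v ⟨j, hjC', rfl, rfl⟩
    rcases eq_or_ne j t₁ with rfl | hjt
    · rw [harcS, harcT]
      exact hconn_ba
    · have hjC : j ∉ C := by
        intro hc
        rcases eq_or_ne j j₀ with rfl | hne
        · exact hj hc
        · exact hjC' ((hC'mem j).mpr (Or.inr ⟨hc, hjt⟩))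
      have harc : ArcRel n N C (arcSrc n N C j) (arcTgt n N C j) := ⟨j, hjC, rfl, rfl⟩
      by_cases hw : lo ≤ j.1 ∧ j.1 < hi
      · obtain ⟨e1, e2⟩ := harc_twist j hw.1 hw.2
        rw [e1, e2]
        exact connRel_trans (htau_C _)
          (connRel_trans (arcRel_connRel harc) (connRel_symm (htau_C _)))
      · obtain ⟨e1, e2⟩ := harc_id j hw
        rw [e1, e2]
        exact arcRel_connRel harc
  -- direction 2 : arcs of C are connections of C'
  have hdir2 : ∀ u v, ArcRel n N C u v → ConnRel n N C' u v := by
    rintro u v ⟨j, hjC, rfl, rfl⟩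
    rcases eq_or_ne j j₀ with rfl | hjj₀
    · exact hconn'_ab
    · have hjC' : j ∉ C' := by
        rw [hC'mem]
        push_neg
        exact ⟨hjj₀, fun hc => absurd hc hjC⟩
      have harc' : ArcRel n N C' (arcSrc n N C' j) (arcTgt n N C' j) := ⟨j, hjC', rfl, rfl⟩
      by_cases hw : lo ≤ j.1 ∧ j.1 < hi
      · obtain ⟨e1, e2⟩ := harc_twist j hw.1 hw.2
        have f1 : arcSrc n N C j = τ (arcSrc n N C' j) := by
          rw [e1, hτ, Equiv.swap_apply_self]
        have f2 : arcTgt n N C j = τ (arcTgt n N C' j) := by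
          rw [e2, hτ, Equiv.swap_apply_self]
        rw [f1, f2]
        exact connRel_trans (htau_C' _)
          (connRel_trans (arcRel_connRel harc') (connRel_symm (htau_C' _)))
      · obtain ⟨e1, e2⟩ := harc_id j hw
        rw [← e1, ← e2]
        exact arcRel_connRel harc'
  -- the key exchange identity at j₀
  have hadjT_j₀ : adjT n (N j₀) * statePerm n N C j₀.1 = statePerm n N C j₀.1 * τ := by
    have hspj₀ : statePerm n N C (j₀.1 + 1) = statePerm n N C j₀.1 := sp_succ_notmem N hj
    rw [adjT_mul_eq]
    congr 1
    rw [hτ]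
    have e1 : (statePerm n N C j₀.1)⁻¹ (lA n (N j₀)) = b := by
      rw [hb_def]
      unfold arcTgt
      rw [hspj₀]
      rfl
    have e2 : (statePerm n N C j₀.1)⁻¹ (lB n (N j₀)) = a := by
      rw [ha_def]
      unfold arcSrc
      rw [hspj₀]
      rfl
    rw [e1, e2, Equiv.swap_comm]
  -- determinism
  have hkey : ∀ u : Fin m, u ∈ C →
      adjT n (N u) * statePerm n N C u.1 = statePerm n N C u.1 * τ → u = t₁ := by
    intro u hu he
    rw [adjT_mul_eq] at he
    have hsw := mul_left_cancel he
    have hpq : (statePerm n N C u.1)⁻¹ (lA n (N u)) ≠ (statePerm n N C u.1)⁻¹ (lB n (N u)) := by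
      intro hc
      exact inv_pair_ne (N u) (statePerm n N C u.1) (congrArg Fin.val hc)
    rw [hτ] at hsw
    have hcases := swap_eq_swap hpq hsw
    have hcr : crossingAt N C a b u.1 := by
      rcases hcases with ⟨e1, e2⟩ | ⟨e1, e2⟩
      · refine ⟨u.2, by rwa [Fin.eta], Or.inl ⟨?_, ?_⟩⟩
        · rw [← e1, Equiv.Perm.apply_inv_self]
        · rw [← e2, Equiv.Perm.apply_inv_self]
      · refine ⟨u.2, by rwa [Fin.eta], Or.inr ⟨?_, ?_⟩⟩
        · rw [← e1, Equiv.Perm.apply_inv_self]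
        · rw [← e2, Equiv.Perm.apply_inv_self]
    exact Fin.ext (cross_unique hC hcr hcross)
  have hdet : ∀ u : Fin m, u ∈ C → Fac N (w0 n) (insert j₀ (C.erase u)) → u = t₁ := by
    intro u hu hFD
    set D := insert j₀ (C.erase u) with hD
    have huj : u ≠ j₀ := fun he => hj (he ▸ hu)
    have hDmem : ∀ j : Fin m, j ∈ D ↔ (j = j₀ ∨ (j ∈ C ∧ j ≠ u)) := by
      intro j
      simp only [hD, Finset.mem_insert, Finset.mem_erase]
      tauto
    have huD : u ∉ D := by
      rw [hDmem]
      push_neg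
      exact ⟨huj, fun _ => rfl⟩
    have hj₀D : j₀ ∈ D := by rw [hDmem]; exact Or.inl rfl
    have hspj₀ : statePerm n N C (j₀.1 + 1) = statePerm n N C j₀.1 := sp_succ_notmem N hj
    rcases Nat.lt_trichotomy u.1 j₀.1 with hcase | hcase | hcase
    · -- u before j₀
      have h1 : statePerm n N D u.1 = statePerm n N C u.1 := by
        apply sp_agree
        intro j hjlt
        rw [hDmem]
        constructor
        · rintro (rfl | ⟨hc, -⟩)
          · omega
          · exact hc
        · intro hc
          exact Or.inr ⟨hc, fun he => by subst he; omega⟩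
      set σ := (statePerm n N C (u.1 + 1))⁻¹ * statePerm n N C u.1 with hσ
      have h2 : statePerm n N D (u.1 + 1) = statePerm n N C (u.1 + 1) * σ := by
        rw [sp_succ_notmem N huD, h1, hσ, mul_inv_cancel_left]
      have h3 : statePerm n N D (j₀.1 + 1) = statePerm n N C (j₀.1 + 1) * (τ * σ) := by
        have hmid : statePerm n N D j₀.1 = statePerm n N C j₀.1 * σ := by
          apply sp_window N D C σ (show u.1 + 1 ≤ j₀.1 by omega) _ h2
          intro j hj1 hj2
          rw [hDmem]
          constructor
          · rintro (rfl | ⟨hc, -⟩)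
            · omega
            · exact hc
          · intro hc
            refine Or.inr ⟨hc, fun he => by subst he; omega⟩
        rw [sp_succ_mem N hj₀D, hmid, ← mul_assoc, hadjT_j₀, hspj₀]
        group
      have h4 : statePerm n N D m = statePerm n N C m * (τ * σ) := by
        apply sp_window N D C (τ * σ) (show j₀.1 + 1 ≤ m from j₀.2) _ h3
        intro j hj1 hj2
        rw [hDmem]
        constructor
        · rintro (rfl | ⟨hc, -⟩)
          · omega
          · exact hc
        · intro hc
          refine Or.inr ⟨hc, fun he => by subst he; omega⟩
      rw [hFD.2, hC.2] at h4
      have h5 : τ * σ = 1 := by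
        have := h4.symm
        rwa [mul_eq_left] at this
      have h6 : σ = τ := by
        have : τ * τ = 1 := by rw [hτ]; exact Equiv.swap_mul_self a b
        calc σ = (τ * τ) * σ := by rw [this, one_mul]
        _ = τ * (τ * σ) := by rw [mul_assoc]
        _ = τ := by rw [h5, mul_one]
      have h7 : statePerm n N C (u.1 + 1) = statePerm n N C u.1 * τ := by
        have : statePerm n N C (u.1 + 1) * σ = statePerm n N C u.1 := by
          rw [hσ, mul_inv_cancel_left]
        rw [h6] at this
        calc statePerm n N C (u.1 + 1)
            = statePerm n N C (u.1 + 1) * τ * τ := by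
              rw [mul_assoc, hτ, Equiv.swap_mul_self, mul_one]
        _ = statePerm n N C u.1 * τ := by rw [this]
      apply hkey u hu
      rw [← h7, sp_succ_mem N hu]
    · exact absurd (Fin.ext hcase) huj
    · -- j₀ before u
      have h1 : statePerm n N D j₀.1 = statePerm n N C j₀.1 := by
        apply sp_agree
        intro j hjlt
        rw [hDmem]
        constructor
        · rintro (rfl | ⟨hc, -⟩)
          · omega
          · exact hc
        · intro hc
          exact Or.inr ⟨hc, fun he => by subst he; omega⟩
      have h2 : statePerm n N D (j₀.1 + 1) = statePerm n N C (j₀.1 + 1) * τ := by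
        rw [sp_succ_mem N hj₀D, h1, hadjT_j₀, hspj₀]
      have h3 : statePerm n N D u.1 = statePerm n N C u.1 * τ := by
        apply sp_window N D C τ (show j₀.1 + 1 ≤ u.1 by omega) _ h2
        intro j hj1 hj2
        rw [hDmem]
        constructor
        · rintro (rfl | ⟨hc, -⟩)
          · omega
          · exact hc
        · intro hc
          refine Or.inr ⟨hc, fun he => by subst he; omega⟩
      set σ := (statePerm n N C (u.1 + 1))⁻¹ * (statePerm n N C u.1 * τ) with hσ
      have h4 : statePerm n N D (u.1 + 1) = statePerm n N C (u.1 + 1) * σ := by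
        rw [sp_succ_notmem N huD, h3, hσ, mul_inv_cancel_left]
      have h5 : statePerm n N D m = statePerm n N C m * σ := by
        apply sp_window N D C σ (show u.1 + 1 ≤ m from u.2) _ h4
        intro j hj1 hj2
        rw [hDmem]
        constructor
        · rintro (rfl | ⟨hc, -⟩)
          · omega
          · exact hc
        · intro hc
          refine Or.inr ⟨hc, fun he => by subst he; omega⟩
      rw [hFD.2, hC.2] at h5
      have h6 : σ = 1 := by
        have := h5.symm
        rwa [mul_eq_left] at this
      have h7 : statePerm n N C u.1 * τ = statePerm n N C (u.1 + 1) := by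
        have : statePerm n N C (u.1 + 1) * σ = statePerm n N C u.1 * τ := by
          rw [hσ, mul_inv_cancel_left]
        rw [h6, mul_one] at this
        exact this.symm
      apply hkey u hu
      rw [h7, sp_succ_mem N hu]
  exact ⟨C', t₁, k, hC', ht₁, rfl, hk1, hkf, hdir1, hdir2, hdet⟩

end Flip
section FlipMain

variable {n m : ℕ}

lemma flip_main (N : Fin m → Fin (n - 1)) (C : Finset (Fin m)) (hC : Fac N (w0 n) C)
    (j₀ : Fin m) (hj : j₀ ∉ C) :
    ∃ (C' : Finset (Fin m)) (t₁ : Fin m) (k : ℕ),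
      Fac N (w0 n) C' ∧ t₁ ∈ C ∧ C' = insert j₀ (C.erase t₁) ∧ 1 ≤ k ∧
      (∀ i : Fin n, brickVector n N C' i = brickVector n N C i +
        k * ((if i = arcTgt n N C j₀ then (1:ℝ) else 0) -
             (if i = arcSrc n N C j₀ then (1:ℝ) else 0))) ∧
      (∀ u v, ArcRel n N C' u v → ConnRel n N C u v) ∧
      (∀ u v, ArcRel n N C u v → ConnRel n N C' u v) ∧
      (∀ u : Fin m, u ∈ C → Fac N (w0 n) (insert j₀ (C.erase u)) → u = t₁) := by
  classical
  set a := arcSrc n N C j₀ with ha_def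
  set b := arcTgt n N C j₀ with hb_def
  have hab : a ≠ b := arcSrc_ne_arcTgt N C j₀
  have hspj₀ : statePerm n N C (j₀.1 + 1) = statePerm n N C j₀.1 := sp_succ_notmem N hj
  have hsa : statePerm n N C (j₀.1 + 1) a = lB n (N j₀) := arcSrc_spec N C j₀
  have hsb : statePerm n N C (j₀.1 + 1) b = lA n (N j₀) := arcTgt_spec N C j₀
  have hABval : (lA n (N j₀)).1 = (N j₀).1 ∧ (lB n (N j₀)).1 = (N j₀).1 + 1 := ⟨rfl, rfl⟩
  have horder0 : (statePerm n N C (j₀.1 + 1) b).1 < (statePerm n N C (j₀.1 + 1) a).1 := by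
    rw [hsa, hsb]
    simp [lA, lB]
  have hadjT_j₀ : adjT n (N j₀) * statePerm n N C j₀.1 =
      statePerm n N C j₀.1 * Equiv.swap a b := by
    rw [adjT_mul_eq]
    congr 1
    have e1 : (statePerm n N C j₀.1)⁻¹ (lA n (N j₀)) = b := by
      rw [hb_def]; unfold arcTgt; rw [hspj₀]; rfl
    have e2 : (statePerm n N C j₀.1)⁻¹ (lB n (N j₀)) = a := by
      rw [ha_def]; unfold arcSrc; rw [hspj₀]; rfl
    rw [e1, e2, Equiv.swap_comm]
  rcases Nat.lt_trichotomy a.1 b.1 with hvab | hvab | hvab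
  · -- CASE A : the crossing of a,b is before j₀
    have h1 : (statePerm n N C 0 a).1 < (statePerm n N C 0 b).1 := by
      rw [sp_zero]; exact hvab
    obtain ⟨t, -, htlt, hm, hmem, hxa, hxb⟩ :=
      order_change_exists (Nat.zero_le (j₀.1 + 1)) h1 horder0
    set t₁ : Fin m := ⟨t, hm⟩ with ht₁def
    have ht₁val : t₁.1 = t := rfl
    have htj₀ : t < j₀.1 := by
      by_contra hcon
      have he : t₁ = j₀ := Fin.ext (by rw [ht₁val]; omega)
      exact hj (he ▸ hmem)
    have hcross : crossingAt N C a b t₁.1 := ⟨hm, hmem, Or.inl ⟨hxa, hxb⟩⟩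
    have hstep : statePerm n N C (t + 1) = statePerm n N C t * Equiv.swap a b :=
      crossingAt_step hcross
    set C' : Finset (Fin m) := insert j₀ (C.erase t₁) with hC'def
    have hC'mem : ∀ j : Fin m, j ∈ C' ↔ (j = j₀ ∨ (j ∈ C ∧ j ≠ t₁)) := by
      intro j
      simp only [hC'def, Finset.mem_insert, Finset.mem_erase]
      tauto
    have ht₁j₀ : t₁ ≠ j₀ := fun he => hj (he ▸ hmem)
    have ht₁C' : t₁ ∉ C' := by
      rw [hC'mem]; push_neg; exact ⟨ht₁j₀, fun _ => rfl⟩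
    have hj₀C' : j₀ ∈ C' := by rw [hC'mem]; exact Or.inl rfl
    have hcard : C'.card = C.card := by
      rw [hC'def, Finset.card_insert_of_notMem (fun hx => hj (Finset.mem_of_mem_erase hx)),
        Finset.card_erase_of_mem hmem]
      have : 1 ≤ C.card := Finset.card_pos.mpr ⟨t₁, hmem⟩
      omega
    have hlow : ∀ s, s ≤ t → statePerm n N C' s = statePerm n N C s := by
      intro s hs
      apply sp_agree
      intro j hjs
      rw [hC'mem]
      constructor
      · rintro (rfl | ⟨hc, -⟩)
        · omega
        · exact hc
      · intro hc
        exact Or.inr ⟨hc, fun he => by rw [he, ht₁val] at hjs; omega⟩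
    have hskip : statePerm n N C' (t + 1) = statePerm n N C (t + 1) * Equiv.swap a b := by
      have e1 : statePerm n N C' (t₁.1 + 1) = statePerm n N C' t₁.1 := sp_succ_notmem N ht₁C'
      rw [ht₁val] at e1
      rw [e1, hlow t le_rfl, hstep, mul_assoc, Equiv.swap_mul_self, mul_one]
    have hmid : ∀ s, t + 1 ≤ s → s ≤ j₀.1 →
        statePerm n N C' s = statePerm n N C s * Equiv.swap a b := by
      intro s hs1 hs2
      apply sp_window N C' C _ hs1 _ hskip
      intro j hj1 hj2
      rw [hC'mem]
      constructor
      · rintro (rfl | ⟨hc, -⟩)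
        · omega
        · exact hc
      · intro hc
        exact Or.inr ⟨hc, fun he => by rw [he, ht₁val] at hj1; omega⟩
    have hAtj0 : statePerm n N C' (j₀.1 + 1) = statePerm n N C (j₀.1 + 1) := by
      rw [sp_succ_mem N hj₀C', hmid j₀.1 (by omega) le_rfl, ← mul_assoc, hadjT_j₀,
        mul_assoc, Equiv.swap_mul_self, mul_one, hspj₀]
    have hhigh : ∀ s, j₀.1 + 1 ≤ s → statePerm n N C' s = statePerm n N C s := by
      intro s hs
      have hw := sp_window N C' C 1 hs ?_ (by rw [hAtj0, mul_one])
      · simpa using hw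
      · intro j hj1 hj2
        rw [hC'mem]
        constructor
        · rintro (rfl | ⟨hc, -⟩)
          · omega
          · exact hc
        · intro hc
          exact Or.inr ⟨hc, fun he => by rw [he, ht₁val] at hj1; omega⟩
    have hC'fac : Fac N (w0 n) C' := ⟨by rw [hcard, hC.1], by rw [hhigh m j₀.2, hC.2]⟩
    have h_out : ∀ j : Fin m, ¬(t ≤ j.1 ∧ j.1 < j₀.1) →
        statePerm n N C' (j.1 + 1) = statePerm n N C (j.1 + 1) := by
      intro j hcond
      push_neg at hcond
      rcases Nat.lt_or_ge j.1 t with h' | h'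
      · exact hlow (j.1 + 1) (by omega)
      · exact hhigh (j.1 + 1) (by have := hcond h'; omega)
    have h_in : ∀ j : Fin m, t ≤ j.1 → j.1 < j₀.1 →
        statePerm n N C' (j.1 + 1) = statePerm n N C (j.1 + 1) * Equiv.swap a b :=
      fun j hj1 hj2 => hmid (j.1 + 1) (by omega) (by omega)
    have hb1 : statePerm n N C (t + 1) b = lA n (N t₁) := by
      rw [hstep, Equiv.Perm.mul_apply, Equiv.swap_apply_right]; exact hxa
    have ha1 : statePerm n N C (t + 1) a = lB n (N t₁) := by
      rw [hstep, Equiv.Perm.mul_apply, Equiv.swap_apply_left]; exact hxb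
    have h_ord : ∀ j : Fin m, t ≤ j.1 → j.1 < j₀.1 →
        (statePerm n N C (j.1 + 1) b).1 < (statePerm n N C (j.1 + 1) a).1 := by
      intro j hj1 hj2
      apply order_persist (show t + 1 ≤ j.1 + 1 by omega)
        (by rw [hb1, ha1]; simp [lA, lB])
      intro s hs1 hs2 hcr
      obtain ⟨hh, hmm, hor⟩ := hcr
      have hcr' : crossingAt N C a b s := ⟨hh, hmm, hor.symm⟩
      have := cross_unique hC hcr' hcross
      omega
    have h_wit : ∃ j : Fin m, t ≤ j.1 ∧ j.1 < j₀.1 ∧ IsBrick N j ∧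
        (statePerm n N C (j.1 + 1) b).1 ≤ (N j).1 ∧
        (N j).1 < (statePerm n N C (j.1 + 1) a).1 := by
      refine ⟨t₁, le_of_eq ht₁val.symm, by rw [ht₁val]; exact htj₀, ?_, ?_, ?_⟩
      · -- IsBrick N t₁
        rcases Nat.lt_trichotomy (N j₀).1 (N t₁).1 with hlt | heq | hgt
        · -- a descends across level (N t₁).1
          obtain ⟨s, hs1, hs2, hsm, hsN⟩ := boundary_cross N C a (N t₁).1
            (show t + 1 ≤ j₀.1 + 1 by omega)
            (Or.inr ⟨by rw [ha1]; simp [lB], by rw [hsa]; simp [lB]; omega⟩)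
          exact ⟨⟨s, hsm⟩, by rw [Fin.lt_def]; show t < s; omega, Fin.ext hsN⟩
        · exact ⟨j₀, by rw [Fin.lt_def]; show t < j₀.1; omega, Fin.ext heq⟩
        · -- b ascends across level (N t₁).1
          obtain ⟨s, hs1, hs2, hsm, hsN⟩ := boundary_cross N C b (N t₁).1
            (show t + 1 ≤ j₀.1 + 1 by omega)
            (Or.inl ⟨by rw [hb1]; simp [lA], by rw [hsb]; simp [lA]; omega⟩)
          exact ⟨⟨s, hsm⟩, by rw [Fin.lt_def]; show t < s; omega, Fin.ext hsN⟩
      · rw [ht₁val, hb1]; simp [lA]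
      · rw [ht₁val, ha1]; simp [lB]
    have harcS : arcSrc n N C' t₁ = b := by
      show (statePerm n N C' (t₁.1 + 1))⁻¹ ⟨(N t₁).1 + 1, _⟩ = b
      have e : (statePerm n N C (t + 1))⁻¹ (lB n (N t₁)) = a := by
        rw [← ha1, Equiv.Perm.inv_apply_self]
      rw [ht₁val, hskip, mul_inv_rev, Equiv.Perm.mul_apply, Equiv.swap_inv]
      show Equiv.swap a b ((statePerm n N C (t + 1))⁻¹ (lB n (N t₁))) = b
      rw [e]
      exact Equiv.swap_apply_left a b
    have harcT : arcTgt n N C' t₁ = a := by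
      show (statePerm n N C' (t₁.1 + 1))⁻¹ ⟨(N t₁).1, _⟩ = a
      have e : (statePerm n N C (t + 1))⁻¹ (lA n (N t₁)) = b := by
        rw [← hb1, Equiv.Perm.inv_apply_self]
      rw [ht₁val, hskip, mul_inv_rev, Equiv.Perm.mul_apply, Equiv.swap_inv]
      show Equiv.swap a b ((statePerm n N C (t + 1))⁻¹ (lA n (N t₁))) = a
      rw [e]
      exact Equiv.swap_apply_right a b
    exact flip_finish N C hC j₀ t₁ hj hmem t j₀.1 hC'fac hcross h_out h_in h_ord h_wit
      harcS harcT
  · exact absurd (Fin.ext hvab) hab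
  · -- CASE B : the crossing of a,b is after j₀
    have h2m : (statePerm n N C m a).1 < (statePerm n N C m b).1 := by
      rw [hC.2, w0_val, w0_val]
      have := a.2; have := b.2
      omega
    obtain ⟨t, ht0, htlt, hm, hmem, hxb, hya⟩ :=
      order_change_exists (show j₀.1 + 1 ≤ m from j₀.2) horder0 h2m
    set t₁ : Fin m := ⟨t, hm⟩ with ht₁def
    have ht₁val : t₁.1 = t := rfl
    have htj₀ : j₀.1 < t := by omega
    have hcross : crossingAt N C a b t₁.1 := ⟨hm, hmem, Or.inr ⟨hxb, hya⟩⟩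
    have hstep : statePerm n N C (t + 1) = statePerm n N C t * Equiv.swap a b :=
      crossingAt_step hcross
    set C' : Finset (Fin m) := insert j₀ (C.erase t₁) with hC'def
    have hC'mem : ∀ j : Fin m, j ∈ C' ↔ (j = j₀ ∨ (j ∈ C ∧ j ≠ t₁)) := by
      intro j
      simp only [hC'def, Finset.mem_insert, Finset.mem_erase]
      tauto
    have ht₁j₀ : t₁ ≠ j₀ := fun he => hj (he ▸ hmem)
    have ht₁C' : t₁ ∉ C' := by
      rw [hC'mem]; push_neg; exact ⟨ht₁j₀, fun _ => rfl⟩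
    have hj₀C' : j₀ ∈ C' := by rw [hC'mem]; exact Or.inl rfl
    have hcard : C'.card = C.card := by
      rw [hC'def, Finset.card_insert_of_notMem (fun hx => hj (Finset.mem_of_mem_erase hx)),
        Finset.card_erase_of_mem hmem]
      have : 1 ≤ C.card := Finset.card_pos.mpr ⟨t₁, hmem⟩
      omega
    have hlow : ∀ s, s ≤ j₀.1 → statePerm n N C' s = statePerm n N C s := by
      intro s hs
      apply sp_agree
      intro j hjs
      rw [hC'mem]
      constructor
      · rintro (rfl | ⟨hc, -⟩)
        · omega
        · exact hc
      · intro hc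
        exact Or.inr ⟨hc, fun he => by rw [he, ht₁val] at hjs; omega⟩
    have hAtj0 : statePerm n N C' (j₀.1 + 1) =
        statePerm n N C (j₀.1 + 1) * Equiv.swap a b := by
      rw [sp_succ_mem N hj₀C', hlow j₀.1 le_rfl, hadjT_j₀, hspj₀]
    have hmid : ∀ s, j₀.1 + 1 ≤ s → s ≤ t →
        statePerm n N C' s = statePerm n N C s * Equiv.swap a b := by
      intro s hs1 hs2
      apply sp_window N C' C _ hs1 _ hAtj0
      intro j hj1 hj2
      rw [hC'mem]
      constructor
      · rintro (rfl | ⟨hc, -⟩)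
        · omega
        · exact hc
      · intro hc
        exact Or.inr ⟨hc, fun he => by rw [he, ht₁val] at hj2; omega⟩
    have hskip : statePerm n N C' (t + 1) = statePerm n N C (t + 1) := by
      have e1 : statePerm n N C' (t₁.1 + 1) = statePerm n N C' t₁.1 := sp_succ_notmem N ht₁C'
      rw [ht₁val] at e1
      rw [e1, hmid t (by omega) le_rfl, ← hstep]
    have hhigh : ∀ s, t + 1 ≤ s → statePerm n N C' s = statePerm n N C s := by
      intro s hs
      have hw := sp_window N C' C 1 hs ?_ (by rw [hskip, mul_one])
      · simpa using hw
      · intro j hj1 hj2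
        rw [hC'mem]
        constructor
        · rintro (rfl | ⟨hc, -⟩)
          · omega
          · exact hc
        · intro hc
          exact Or.inr ⟨hc, fun he => by rw [he, ht₁val] at hj1; omega⟩
    have hC'fac : Fac N (w0 n) C' :=
      ⟨by rw [hcard, hC.1], by rw [hhigh m (by omega), hC.2]⟩
    have h_out : ∀ j : Fin m, ¬(j₀.1 ≤ j.1 ∧ j.1 < t) →
        statePerm n N C' (j.1 + 1) = statePerm n N C (j.1 + 1) := by
      intro j hcond
      push_neg at hcond
      rcases Nat.lt_or_ge j.1 j₀.1 with h' | h'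
      · exact hlow (j.1 + 1) (by omega)
      · exact hhigh (j.1 + 1) (by have := hcond h'; omega)
    have h_in : ∀ j : Fin m, j₀.1 ≤ j.1 → j.1 < t →
        statePerm n N C' (j.1 + 1) = statePerm n N C (j.1 + 1) * Equiv.swap a b :=
      fun j hj1 hj2 => hmid (j.1 + 1) (by omega) (by omega)
    have h_ord : ∀ j : Fin m, j₀.1 ≤ j.1 → j.1 < t →
        (statePerm n N C (j.1 + 1) b).1 < (statePerm n N C (j.1 + 1) a).1 := by
      intro j hj1 hj2
      apply order_persist (show j₀.1 + 1 ≤ j.1 + 1 by omega) horder0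
      intro s hs1 hs2 hcr
      obtain ⟨hh, hmm, hor⟩ := hcr
      have hcr' : crossingAt N C a b s := ⟨hh, hmm, hor.symm⟩
      have := cross_unique hC hcr' hcross
      omega
    have h_wit : ∃ j : Fin m, j₀.1 ≤ j.1 ∧ j.1 < t ∧ IsBrick N j ∧
        (statePerm n N C (j.1 + 1) b).1 ≤ (N j).1 ∧
        (N j).1 < (statePerm n N C (j.1 + 1) a).1 := by
      refine ⟨j₀, le_rfl, by omega, ?_, ?_, ?_⟩
      · -- IsBrick N j₀
        rcases Nat.lt_trichotomy (N t₁).1 (N j₀).1 with hlt | heq | hgt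
        · -- a descends across level (N j₀).1
          obtain ⟨s, hs1, hs2, hsm, hsN⟩ := boundary_cross N C a (N j₀).1
            (show j₀.1 + 1 ≤ t by omega)
            (Or.inr ⟨by rw [hsa]; simp [lB], by rw [hya]; simp [lB]; omega⟩)
          exact ⟨⟨s, hsm⟩, by rw [Fin.lt_def]; show j₀.1 < s; omega, Fin.ext hsN⟩
        · exact ⟨t₁, by rw [Fin.lt_def]; show j₀.1 < t; omega, Fin.ext heq⟩
        · -- b ascends across level (N j₀).1
          obtain ⟨s, hs1, hs2, hsm, hsN⟩ := boundary_cross N C b (N j₀).1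
            (show j₀.1 + 1 ≤ t by omega)
            (Or.inl ⟨by rw [hsb]; simp [lA], by rw [hxb]; simp [lA]; omega⟩)
          exact ⟨⟨s, hsm⟩, by rw [Fin.lt_def]; show j₀.1 < s; omega, Fin.ext hsN⟩
      · rw [hsb]; simp [lA]
      · rw [hsa]; simp [lB]
    have harcS : arcSrc n N C' t₁ = b := by
      show (statePerm n N C' (t₁.1 + 1))⁻¹ ⟨(N t₁).1 + 1, _⟩ = b
      have e : statePerm n N C (t + 1) b = lB n (N t₁) := by
        rw [hstep, Equiv.Perm.mul_apply, Equiv.swap_apply_right]; exact hya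
      rw [ht₁val, hskip]
      show (statePerm n N C (t + 1))⁻¹ (lB n (N t₁)) = b
      rw [← e, Equiv.Perm.inv_apply_self]
    have harcT : arcTgt n N C' t₁ = a := by
      show (statePerm n N C' (t₁.1 + 1))⁻¹ ⟨(N t₁).1, _⟩ = a
      have e : statePerm n N C (t + 1) a = lA n (N t₁) := by
        rw [hstep, Equiv.Perm.mul_apply, Equiv.swap_apply_left]; exact hxb
      rw [ht₁val, hskip]
      show (statePerm n N C (t + 1))⁻¹ (lA n (N t₁)) = a
      rw [← e, Equiv.Perm.inv_apply_self]
    exact flip_finish N C hC j₀ t₁ hj hmem j₀.1 t hC'fac hcross h_out h_in h_ord h_wit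
      harcS harcT

end FlipMain
section Restrict

variable {n m : ℕ}

/-- Restriction of a subset of positions of a word of length `m+1` to the first `m` letters. -/
def restr {m : ℕ} (C : Finset (Fin (m + 1))) : Finset (Fin m) :=
  univ.filter (fun j => Fin.castSucc j ∈ C)

lemma mem_restr {C : Finset (Fin (m + 1))} {j : Fin m} :
    j ∈ restr C ↔ Fin.castSucc j ∈ C := by
  simp [restr]

lemma castSucc_ne_last (j : Fin m) : Fin.castSucc j ≠ Fin.last m :=
  (Fin.castSucc_lt_last j).ne

lemma restr_image (C : Finset (Fin (m + 1))) :
    (restr C).image Fin.castSucc = C.erase (Fin.last m) := by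
  ext x
  simp only [Finset.mem_image, Finset.mem_erase]
  constructor
  · rintro ⟨j, hj, rfl⟩
    exact ⟨castSucc_ne_last j, mem_restr.mp hj⟩
  · rintro ⟨hx, hxC⟩
    have hxm : x.1 < m := by
      have := x.2
      rcases Nat.lt_or_ge x.1 m with h | h
      · exact h
      · exact absurd (Fin.ext (show x.1 = m by omega) : x = Fin.last m) hx
    refine ⟨⟨x.1, hxm⟩, mem_restr.mpr ?_, ?_⟩
    · rwa [show Fin.castSucc ⟨x.1, hxm⟩ = x from Fin.ext rfl]
    · exact Fin.ext rfl

lemma restr_card {C : Finset (Fin (m + 1))} :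
    (restr C).card = (C.erase (Fin.last m)).card := by
  rw [← restr_image, Finset.card_image_of_injective _ (Fin.castSucc_injective m)]

lemma sp_last (Q : Fin (m + 1) → Fin (n - 1)) (C : Finset (Fin (m + 1))) :
    statePerm n Q C (m + 1) =
      (if Fin.last m ∈ C then adjT n (Q (Fin.last m)) else 1) * statePerm n Q C m := by
  rw [sp_succ, dif_pos (Nat.lt_succ_self m)]
  rfl

lemma sp_cast (Q : Fin (m + 1) → Fin (n - 1)) (E : Finset (Fin m)) :
    ∀ t, t ≤ m → statePerm n (Q ∘ Fin.castSucc) E t = statePerm n Q (E.image Fin.castSucc) t := by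
  intro t
  induction t with
  | zero => intro _; rfl
  | succ s ih =>
    intro hs
    have hsm : s < m := by omega
    have hsm1 : s < m + 1 := by omega
    rw [sp_succ, sp_succ, dif_pos hsm, dif_pos hsm1, ih (by omega)]
    have hcast : Fin.castSucc (⟨s, hsm⟩ : Fin m) = (⟨s, hsm1⟩ : Fin (m + 1)) := Fin.ext rfl
    have hmem : ((⟨s, hsm⟩ : Fin m) ∈ E) ↔ ((⟨s, hsm1⟩ : Fin (m + 1)) ∈ E.image Fin.castSucc) := by
      rw [← hcast]
      constructor
      · exact fun h => Finset.mem_image_of_mem _ h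
      · intro h
        obtain ⟨x, hx, he⟩ := Finset.mem_image.mp h
        rwa [← Fin.castSucc_injective m he]
    by_cases hE : (⟨s, hsm⟩ : Fin m) ∈ E
    · rw [if_pos hE, if_pos (hmem.mp hE)]
      have : Q (Fin.castSucc ⟨s, hsm⟩) = Q ⟨s, hsm1⟩ := by rw [hcast]
      show adjT n (Q (Fin.castSucc ⟨s, hsm⟩)) * _ = adjT n (Q ⟨s, hsm1⟩) * _
      rw [this]
    · rw [if_neg hE, if_neg (fun hc => hE (hmem.mpr hc))]

lemma last_not_mem_image (E : Finset (Fin m)) : Fin.last m ∉ E.image Fin.castSucc := by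
  intro h
  obtain ⟨j, -, he⟩ := Finset.mem_image.mp h
  exact castSucc_ne_last j he

lemma nInv_sp_le_card (Q : Fin m → Fin (n - 1)) (C : Finset (Fin m)) :
    nInv n (statePerm n Q C m) ≤ C.card := by
  have := (nInv_sp_window Q C (Nat.zero_le m)).1
  rw [sp_zero, nInv_one, cnt_zero, cnt_full] at this
  omega

lemma adjT_sq (i : Fin (n - 1)) : adjT n i * adjT n i = 1 := by
  rw [adjT_def]; exact Equiv.swap_mul_self _ _

lemma fac_restrict_notlast {Q : Fin (m + 1) → Fin (n - 1)} {π : Equiv.Perm (Fin n)}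
    {C : Finset (Fin (m + 1))} (hl : Fin.last m ∉ C) (h : Fac Q π C) :
    Fac (Q ∘ Fin.castSucc) π (restr C) := by
  constructor
  · rw [restr_card, Finset.erase_eq_of_notMem hl, h.1]
  · rw [sp_cast Q (restr C) m le_rfl, restr_image, Finset.erase_eq_of_notMem hl]
    have := h.2
    rw [sp_last, if_neg hl, one_mul] at this
    exact this

lemma fac_restrict_last {Q : Fin (m + 1) → Fin (n - 1)} {π : Equiv.Perm (Fin n)}
    {C : Finset (Fin (m + 1))} (hl : Fin.last m ∈ C) (h : Fac Q π C) :
    Fac (Q ∘ Fin.castSucc) (adjT n (Q (Fin.last m)) * π) (restr C) ∧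
      nInv n π = nInv n (adjT n (Q (Fin.last m)) * π) + 1 := by
  have hsp : statePerm n Q C m = adjT n (Q (Fin.last m)) * π := by
    have h2 := h.2
    rw [sp_last, if_pos hl] at h2
    rw [← h2, ← mul_assoc, adjT_sq, one_mul]
  have hsp' : statePerm n (Q ∘ Fin.castSucc) (restr C) m = adjT n (Q (Fin.last m)) * π := by
    rw [sp_cast Q (restr C) m le_rfl, restr_image]
    rw [← hsp]
    apply sp_agree
    intro j hj
    simp only [Finset.mem_erase]
    constructor
    · rintro ⟨-, hc⟩; exact hc
    · intro hc
      refine ⟨fun he => ?_, hc⟩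
      rw [he] at hj
      simp [Fin.last] at hj
  have hcard : (restr C).card = nInv n π - 1 := by
    rw [restr_card, Finset.card_erase_of_mem hl, h.1]
  have hb1 : nInv n (adjT n (Q (Fin.last m)) * π) ≤ nInv n π - 1 := by
    have := nInv_sp_le_card (Q ∘ Fin.castSucc) (restr C)
    rw [hsp', hcard] at this
    exact this
  have hb2 : nInv n π ≤ nInv n (adjT n (Q (Fin.last m)) * π) + 1 :=
    (nInv_mul_bounds (Q (Fin.last m)) π).2
  have hpos : 1 ≤ nInv n π := by
    have h1 := Finset.card_pos.mpr ⟨_, hl⟩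
    have h2 := h.1
    omega
  constructor
  · exact ⟨by omega, hsp'⟩
  · omega

lemma fac_extend_notlast {Q : Fin (m + 1) → Fin (n - 1)} {π : Equiv.Perm (Fin n)}
    {E : Finset (Fin m)} (h : Fac (Q ∘ Fin.castSucc) π E) :
    Fac Q π (E.image Fin.castSucc) := by
  constructor
  · rw [Finset.card_image_of_injective _ (Fin.castSucc_injective m), h.1]
  · rw [sp_last, if_neg (last_not_mem_image E), one_mul, ← sp_cast Q E m le_rfl, h.2]

lemma fac_extend_last {Q : Fin (m + 1) → Fin (n - 1)} {π : Equiv.Perm (Fin n)}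
    {E : Finset (Fin m)}
    (hlen : nInv n π = nInv n (adjT n (Q (Fin.last m)) * π) + 1)
    (h : Fac (Q ∘ Fin.castSucc) (adjT n (Q (Fin.last m)) * π) E) :
    Fac Q π (insert (Fin.last m) (E.image Fin.castSucc)) := by
  constructor
  · rw [Finset.card_insert_of_notMem (last_not_mem_image E),
      Finset.card_image_of_injective _ (Fin.castSucc_injective m), h.1]
    omega
  · rw [sp_last, if_pos (Finset.mem_insert_self _ _)]
    have he : statePerm n Q (insert (Fin.last m) (E.image Fin.castSucc)) m =
        statePerm n Q (E.image Fin.castSucc) m := by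
      apply sp_agree
      intro j hj
      simp only [Finset.mem_insert]
      constructor
      · rintro (rfl | hc)
        · simp [Fin.last] at hj
        · exact hc
      · exact fun hc => Or.inr hc
    rw [he, ← sp_cast Q E m le_rfl, h.2, ← mul_assoc, adjT_sq, one_mul]

end Restrict
section Connectivity

variable {n m : ℕ}

/-- Two facets differ by exchanging one position. -/
def AdjStep {n m : ℕ} (Q : Fin m → Fin (n - 1)) (π : Equiv.Perm (Fin n))
    (X Y : Finset (Fin m)) : Prop :=
  Fac Q π X ∧ Fac Q π Y ∧ ∃ j₀ t₁ : Fin m, j₀ ∉ X ∧ t₁ ∈ X ∧ Y = insert j₀ (X.erase t₁)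

lemma adjStep_symm {Q : Fin m → Fin (n - 1)} {π : Equiv.Perm (Fin n)}
    {X Y : Finset (Fin m)} (h : AdjStep Q π X Y) : AdjStep Q π Y X := by
  obtain ⟨hX, hY, j₀, t₁, hj₀, ht₁, rfl⟩ := h
  refine ⟨hY, hX, t₁, j₀, ?_, ?_, ?_⟩
  · simp only [Finset.mem_insert, Finset.mem_erase]
    push_neg
    exact ⟨fun he => hj₀ (he ▸ ht₁), fun hc => absurd rfl hc⟩
  · exact Finset.mem_insert_self _ _
  · ext j
    simp only [Finset.mem_insert, Finset.mem_erase]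
    constructor
    · intro hj
      rcases eq_or_ne j t₁ with rfl | hne
      · exact Or.inl rfl
      · exact Or.inr ⟨fun he => hj₀ (he ▸ hj), Or.inr ⟨hne, hj⟩⟩
    · rintro (rfl | ⟨hne, (rfl | ⟨-, hj⟩)⟩)
      · exact ht₁
      · exact absurd rfl hne
      · exact hj

lemma adjStep_lift_notlast (Q : Fin (m + 1) → Fin (n - 1)) (π : Equiv.Perm (Fin n))
    {E F : Finset (Fin m)} (h : AdjStep (Q ∘ Fin.castSucc) π E F) :
    AdjStep Q π (E.image Fin.castSucc) (F.image Fin.castSucc) := by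
  obtain ⟨hE, hF, j₀, t₁, hj₀, ht₁, rfl⟩ := h
  refine ⟨fac_extend_notlast hE, fac_extend_notlast hF,
    Fin.castSucc j₀, Fin.castSucc t₁, ?_, Finset.mem_image_of_mem _ ht₁, ?_⟩
  · intro hc
    obtain ⟨x, hx, he⟩ := Finset.mem_image.mp hc
    rw [Fin.castSucc_injective m he] at hx
    exact hj₀ hx
  · rw [Finset.image_insert, Finset.image_erase (Fin.castSucc_injective m)]

lemma adjStep_lift_last (Q : Fin (m + 1) → Fin (n - 1)) (π : Equiv.Perm (Fin n))
    (hlen : nInv n π = nInv n (adjT n (Q (Fin.last m)) * π) + 1)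
    {E F : Finset (Fin m)} (h : AdjStep (Q ∘ Fin.castSucc) (adjT n (Q (Fin.last m)) * π) E F) :
    AdjStep Q π (insert (Fin.last m) (E.image Fin.castSucc))
      (insert (Fin.last m) (F.image Fin.castSucc)) := by
  obtain ⟨hE, hF, j₀, t₁, hj₀, ht₁, rfl⟩ := h
  refine ⟨fac_extend_last hlen hE, fac_extend_last hlen hF,
    Fin.castSucc j₀, Fin.castSucc t₁, ?_, ?_, ?_⟩
  · intro hc
    rcases Finset.mem_insert.mp hc with he | hc'
    · exact castSucc_ne_last j₀ he
    · obtain ⟨x, hx, he⟩ := Finset.mem_image.mp hc'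
      rw [Fin.castSucc_injective m he] at hx
      exact hj₀ hx
  · exact Finset.mem_insert_of_mem (Finset.mem_image_of_mem _ ht₁)
  · rw [Finset.image_insert, Finset.image_erase (Fin.castSucc_injective m),
      Finset.erase_insert_of_ne ((castSucc_ne_last t₁).symm), Finset.insert_comm]

theorem conn_facets (n : ℕ) : ∀ (m : ℕ) (Q : Fin m → Fin (n - 1)) (π : Equiv.Perm (Fin n))
    (C D : Finset (Fin m)), Fac Q π C → Fac Q π D →
    Relation.ReflTransGen (AdjStep Q π) C D := by
  intro m
  induction m with
  | zero =>
    intro Q π C D hC hD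
    have hCD : C = D := by
      have h1 : C = ∅ := Finset.eq_empty_of_forall_notMem (fun x => x.elim0)
      have h2 : D = ∅ := Finset.eq_empty_of_forall_notMem (fun x => x.elim0)
      rw [h1, h2]
    rw [hCD]
  | succ m ih =>
    intro Q π C D hC hD
    have hins : ∀ X : Finset (Fin (m + 1)), Fin.last m ∈ X →
        insert (Fin.last m) ((restr X).image Fin.castSucc) = X := by
      intro X hl
      rw [restr_image, Finset.insert_erase hl]
    have Hlast : ∀ X Y, Fac Q π X → Fac Q π Y → Fin.last m ∈ X → Fin.last m ∈ Y →
        Relation.ReflTransGen (AdjStep Q π) X Y := by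
      intro X Y hX hY hlX hlY
      obtain ⟨hEX, hlenX⟩ := fac_restrict_last hlX hX
      obtain ⟨hEY, -⟩ := fac_restrict_last hlY hY
      have hpath := ih (Q ∘ Fin.castSucc) (adjT n (Q (Fin.last m)) * π) (restr X) (restr Y) hEX hEY
      have hlift := Relation.ReflTransGen.lift
        (fun Z : Finset (Fin m) => insert (Fin.last m) (Z.image Fin.castSucc))
        (fun A B hAB => adjStep_lift_last Q π hlenX hAB) _ _ hpath
      simpa only [Function.onFun, hins X hlX, hins Y hlY] using hlift
    have Hnotlast : ∀ X Y, Fac Q π X → Fac Q π Y → Fin.last m ∉ X → Fin.last m ∉ Y →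
        Relation.ReflTransGen (AdjStep Q π) X Y := by
      intro X Y hX hY hlX hlY
      have hpath := ih (Q ∘ Fin.castSucc) π (restr X) (restr Y)
        (fac_restrict_notlast hlX hX) (fac_restrict_notlast hlY hY)
      have hlift := Relation.ReflTransGen.lift
        (fun Z : Finset (Fin m) => Z.image Fin.castSucc)
        (fun A B hAB => adjStep_lift_notlast Q π hAB) _ _ hpath
      simpa only [Function.onFun, restr_image, Finset.erase_eq_of_notMem hlX,
        Finset.erase_eq_of_notMem hlY] using hlift
    have Hbridge : ∀ X, Fac Q π X → Fin.last m ∉ X → ∀ Y, Fac Q π Y → Fin.last m ∈ Y →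
        ∃ X', Fac Q π X' ∧ Fin.last m ∈ X' ∧ AdjStep Q π X X' := by
      intro X hX hlX Y hY hlY
      have hlen := (fac_restrict_last hlY hY).2
      set u := π⁻¹ (lB n (Q (Fin.last m))) with hu
      set v := π⁻¹ (lA n (Q (Fin.last m))) with hv
      have huv : u.1 < v.1 := by
        rcases Nat.lt_trichotomy u.1 v.1 with h | h | h
        · exact h
        · exact absurd h.symm (inv_pair_ne (Q (Fin.last m)) π)
        · exfalso
          have := nInv_mul_pos (Q (Fin.last m)) π h
          omega
      have h1 : (statePerm n Q X 0 u).1 < (statePerm n Q X 0 v).1 := by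
        rw [sp_zero]; exact huv
      have hXm1 : statePerm n Q X (m + 1) = π := hX.2
      have h2 : (statePerm n Q X (m + 1) v).1 < (statePerm n Q X (m + 1) u).1 := by
        rw [hXm1, hu, hv, Equiv.Perm.apply_inv_self, Equiv.Perm.apply_inv_self]
        simp [lA, lB]
      obtain ⟨t, -, htlt, hm, hmem, hxu, hxv⟩ :=
        order_change_exists (Nat.zero_le (m + 1)) h1 h2
      set t₁ : Fin (m + 1) := ⟨t, hm⟩ with ht₁def
      have ht₁val : t₁.1 = t := rfl
      have htm : t < m := by
        rcases Nat.lt_or_ge t m with h | h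
        · exact h
        · exfalso
          have he : t₁ = Fin.last m := Fin.ext (by rw [ht₁val]; show t = m; omega)
          exact hlX (he ▸ hmem)
      have hcr : crossingAt Q X u v t := ⟨hm, hmem, Or.inl ⟨hxu, hxv⟩⟩
      have hstep := crossingAt_step hcr
      set X' : Finset (Fin (m + 1)) := insert (Fin.last m) (X.erase t₁) with hX'def
      have hlX' : Fin.last m ∈ X' := Finset.mem_insert_self _ _
      have ht₁X' : t₁ ∉ X' := by
        simp only [hX'def, Finset.mem_insert, Finset.mem_erase]
        push_neg
        refine ⟨fun he => hlX (he ▸ hmem), fun hc => absurd rfl hc⟩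
      have hcard : X'.card = X.card := by
        rw [hX'def, Finset.card_insert_of_notMem
          (fun hc => hlX (Finset.mem_of_mem_erase hc)), Finset.card_erase_of_mem hmem]
        have : 1 ≤ X.card := Finset.card_pos.mpr ⟨t₁, hmem⟩
        omega
      have hX'memiff : ∀ j : Fin (m + 1), j ∈ X' ↔ (j = Fin.last m ∨ (j ∈ X ∧ j ≠ t₁)) := by
        intro j
        simp only [hX'def, Finset.mem_insert, Finset.mem_erase]
        tauto
      have hlow : ∀ s, s ≤ t → statePerm n Q X' s = statePerm n Q X s := by
        intro s hs
        apply sp_agree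
        intro j hjs
        rw [hX'memiff]
        constructor
        · rintro (rfl | ⟨hc, -⟩)
          · exfalso
            have : (Fin.last m).1 = m := rfl
            omega
          · exact hc
        · intro hc
          exact Or.inr ⟨hc, fun he => by rw [he, ht₁val] at hjs; omega⟩
      have hskip : statePerm n Q X' (t + 1) = statePerm n Q X (t + 1) * Equiv.swap u v := by
        have e1 : statePerm n Q X' (t₁.1 + 1) = statePerm n Q X' t₁.1 := sp_succ_notmem Q ht₁X'
        rw [ht₁val] at e1
        rw [e1, hlow t le_rfl, hstep, mul_assoc, Equiv.swap_mul_self, mul_one]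
      have hmid : statePerm n Q X' m = statePerm n Q X m * Equiv.swap u v := by
        apply sp_window Q X' X _ (show t + 1 ≤ m by omega) _ hskip
        intro j hj1 hj2
        rw [hX'memiff]
        constructor
        · rintro (rfl | ⟨hc, -⟩)
          · exfalso
            have : (Fin.last m).1 = m := rfl
            omega
          · exact hc
        · intro hc
          exact Or.inr ⟨hc, fun he => by rw [he, ht₁val] at hj1; omega⟩
      have hXm : statePerm n Q X m = π := by
        have := hX.2
        rwa [sp_last, if_neg hlX, one_mul] at this
      have hX'fac : Fac Q π X' := by
        constructor
        · rw [hcard, hX.1]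
        · rw [sp_last, if_pos hlX', hmid, hXm, ← mul_assoc, adjT_mul_eq, ← hu, ← hv]
          rw [Equiv.swap_comm v u]
          rw [mul_assoc, Equiv.swap_mul_self, mul_one]
      exact ⟨X', hX'fac, hlX', hX, hX'fac, Fin.last m, t₁, hlX, hmem, rfl⟩
    by_cases hlC : Fin.last m ∈ C <;> by_cases hlD : Fin.last m ∈ D
    · exact Hlast C D hC hD hlC hlD
    · obtain ⟨D', hD', hlD', hstep⟩ := Hbridge D hD hlD C hC hlC
      exact Relation.ReflTransGen.tail (Hlast C D' hC hD' hlC hlD') (adjStep_symm hstep)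
    · obtain ⟨C', hC', hlC', hstep⟩ := Hbridge C hC hlC D hD hlD
      exact Relation.ReflTransGen.head hstep (Hlast C' D hC' hD hlC' hlD)
    · exact Hnotlast C D hC hD hlC hlD

end Connectivity
section DimSpan

variable {n : ℕ}

/-- Standard basis vector. -/
def eVec {n : ℕ} (u : Fin n) : Fin n → ℝ := fun i => if i = u then 1 else 0

lemma min'_subst {α : Type*} [LinearOrder α] {s t : Finset α} (h : s = t) (hs : s.Nonempty) :
    s.min' hs = t.min' (h ▸ hs) := by subst h; rfl

lemma dim_span_conn (R : Fin n → Fin n → Prop) (hrefl : ∀ a, R a a)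
    (hsymm : ∀ {a b}, R a b → R b a) (htrans : ∀ {a b c}, R a b → R b c → R a c) :
    Module.finrank ℝ (Submodule.span ℝ {g : Fin n → ℝ | ∃ u v, R u v ∧ g = eVec u - eVec v}) =
      n - (univ.image (fun a : Fin n => univ.filter (fun b => R a b))).card := by
  classical
  have hne : ∀ i : Fin n, (univ.filter (fun b => R i b)).Nonempty := by
    intro i
    refine ⟨i, ?_⟩
    simp only [mem_filter, mem_univ, true_and]
    exact hrefl i
  set rep : Fin n → Fin n := fun i => (univ.filter (fun b => R i b)).min' (hne i) with hrep
  have hRrep : ∀ i, R i (rep i) := by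
    intro i
    have := Finset.min'_mem (univ.filter (fun b => R i b)) (hne i)
    simpa using this
  have hclass_eq : ∀ {i j}, R i j →
      univ.filter (fun b => R i b) = univ.filter (fun b => R j b) := by
    intro i j hij
    ext b
    simp only [mem_filter, mem_univ, true_and]
    exact ⟨fun h => htrans (hsymm hij) h, fun h => htrans hij h⟩
  have hrep_eq : ∀ {i j}, R i j → rep i = rep j := by
    intro i j hij
    rw [hrep]
    exact min'_subst (hclass_eq hij) (hne i)
  have hrep_idem : ∀ i, rep (rep i) = rep i :=
    fun i => hrep_eq (hsymm (hRrep i))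
  set T : Finset (Fin n) := univ.filter (fun i => ¬ rep i = i) with hT
  set Rs : Finset (Fin n) := univ.filter (fun i => rep i = i) with hRs
  have himage : univ.image rep = Rs := by
    ext r
    simp only [Finset.mem_image, hRs, mem_filter, mem_univ, true_and]
    constructor
    · rintro ⟨a, -, rfl⟩
      exact hrep_idem a
    · intro h
      exact ⟨r, h⟩
  have hclasscard : (univ.image (fun a : Fin n => univ.filter (fun b => R a b))).card =
      Rs.card := by
    rw [← himage]
    symm
    apply Finset.card_bij (fun r _ => univ.filter (fun b => R r b))
    · rintro r hr
      obtain ⟨a, -, rfl⟩ := Finset.mem_image.mp hr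
      rw [← hclass_eq (hRrep a)]
      exact Finset.mem_image_of_mem _ (mem_univ a)
    · rintro r hr r' hr' he
      have hRrr' : R r r' := by
        have : r' ∈ univ.filter (fun b => R r' b) := by simp [hrefl r']
        rw [← he] at this
        simpa using this
      have e1 : rep r = rep r' := hrep_eq hRrr'
      obtain ⟨a, -, rfl⟩ := Finset.mem_image.mp hr
      obtain ⟨a', -, rfl⟩ := Finset.mem_image.mp hr'
      rwa [hrep_idem a, hrep_idem a'] at e1
    · rintro U hU
      obtain ⟨a, -, rfl⟩ := Finset.mem_image.mp hU
      exact ⟨rep a, Finset.mem_image_of_mem _ (mem_univ a), hclass_eq (hsymm (hRrep a))⟩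
  have hTRs : Rs.card + T.card = n := by
    have := Finset.card_filter_add_card_filter_not
      (s := (univ : Finset (Fin n))) (fun i => rep i = i)
    rwa [Finset.card_univ, Fintype.card_fin] at this
  -- the linearly independent spanning family
  set g : {i // i ∈ T} → (Fin n → ℝ) := fun i => eVec i.1 - eVec (rep i.1) with hg
  have hterm : ∀ u : Fin n, eVec u - eVec (rep u) ∈
      Submodule.span ℝ (Set.range g) := by
    intro u
    by_cases h : rep u = u
    · rw [h, sub_self]
      exact Submodule.zero_mem _
    · exact Submodule.subset_span ⟨⟨u, by simp [hT, h]⟩, rfl⟩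
  have hspan_eq : Submodule.span ℝ (Set.range g) =
      Submodule.span ℝ {g : Fin n → ℝ | ∃ u v, R u v ∧ g = eVec u - eVec v} := by
    apply le_antisymm
    · rw [Submodule.span_le]
      rintro x ⟨i, rfl⟩
      exact Submodule.subset_span ⟨i.1, rep i.1, hRrep i.1, rfl⟩
    · rw [Submodule.span_le]
      rintro x ⟨u, v, huv, rfl⟩
      have he : eVec u - eVec v = (eVec u - eVec (rep u)) - (eVec v - eVec (rep v)) := by
        rw [hrep_eq huv]
        exact (sub_sub_sub_cancel_right _ _ _).symm
      rw [he]
      exact Submodule.sub_mem _ (hterm u) (hterm v)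
  have hnotrep : ∀ (i₀ : {i // i ∈ T}) (i : {i // i ∈ T}), ¬ (i₀.1 = rep i.1) := by
    rintro i₀ i he
    have h1 : rep i₀.1 = i₀.1 := by rw [he, hrep_idem]
    have h2 := i₀.2
    simp only [hT, mem_filter, mem_univ, true_and] at h2
    exact h2 h1
  have hlinind : LinearIndependent ℝ g := by
    rw [Fintype.linearIndependent_iff]
    intro c hsum i₀
    have heval := congrFun hsum i₀.1
    rw [Finset.sum_apply] at heval
    have hterms : ∀ i : {i // i ∈ T}, (c i • g i) i₀.1 = c i * (if i₀.1 = i.1 then 1 else 0) := by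
      intro i
      rw [hg]
      simp only [Pi.smul_apply, Pi.sub_apply, smul_eq_mul]
      rw [show eVec i.1 i₀.1 = (if i₀.1 = i.1 then (1:ℝ) else 0) from rfl,
        show eVec (rep i.1) i₀.1 = (if i₀.1 = rep i.1 then (1:ℝ) else 0) from rfl,
        if_neg (hnotrep i₀ i)]
      ring
    rw [Finset.sum_congr rfl (fun i _ => hterms i)] at heval
    rw [Finset.sum_eq_single i₀ (fun i _ hne => by
        rw [if_neg (fun he => hne (Subtype.ext he.symm)), mul_zero])
      (fun h => absurd (Finset.mem_univ i₀) h)] at heval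
    rw [if_pos rfl, mul_one] at heval
    have : (0 : Fin n → ℝ) i₀.1 = 0 := rfl
    rw [this] at heval
    exact heval
  rw [← hspan_eq, finrank_span_eq_card hlinind, hclasscard]
  have : Fintype.card {i // i ∈ T} = T.card := Fintype.card_coe T
  omega

end DimSpan
section Assembly

variable {n m : ℕ}

lemma connRel_mono {N : Fin m → Fin (n - 1)} {P Q : Finset (Fin m)}
    (h : ∀ x y, ArcRel n N P x y → ConnRel n N Q x y) :
    ∀ x y, ConnRel n N P x y → ConnRel n N Q x y := by
  intro x y hxy
  induction hxy with
  | refl => exact Relation.ReflTransGen.refl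
  | tail hs hstep ih =>
    rcases hstep with hA | hA
    · exact connRel_trans ih (h _ _ hA)
    · exact connRel_trans ih (connRel_symm (h _ _ hA))

lemma step_props {N : Fin m → Fin (n - 1)} {X Y : Finset (Fin m)}
    (h : AdjStep N (w0 n) X Y) :
    (∀ u v, ConnRel n N X u v ↔ ConnRel n N Y u v) ∧
    ∃ (a b : Fin n) (k : ℝ), ConnRel n N X a b ∧
      brickVector n N Y = brickVector n N X + k • (eVec b - eVec a) := by
  obtain ⟨hX, hY, j₀, u, hj₀, hu, hYeq⟩ := h
  obtain ⟨C', t₁, k, hC', ht₁, hC'eq, hk1, hkf, hd1, hd2, hdet⟩ := flip_main N X hX j₀ hj₀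
  have hut : u = t₁ := hdet u hu (hYeq ▸ hY)
  have hYC' : Y = C' := by rw [hYeq, hut, hC'eq]
  constructor
  · intro u' v'
    constructor
    · intro hc
      rw [hYC']
      exact connRel_mono hd2 _ _ hc
    · intro hc
      rw [hYC'] at hc
      exact connRel_mono hd1 _ _ hc
  · refine ⟨arcSrc n N X j₀, arcTgt n N X j₀, (k : ℝ),
      arcRel_connRel ⟨j₀, hj₀, rfl, rfl⟩, ?_⟩
    rw [hYC']
    funext i
    rw [hkf i]
    simp only [Pi.add_apply, Pi.smul_apply, Pi.sub_apply, smul_eq_mul]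
    rw [show eVec (arcTgt n N X j₀) i = (if i = arcTgt n N X j₀ then (1:ℝ) else 0) from rfl,
      show eVec (arcSrc n N X j₀) i = (if i = arcSrc n N X j₀ then (1:ℝ) else 0) from rfl]

lemma path_props {N : Fin m → Fin (n - 1)} {C₀ : Finset (Fin m)} (h₀ : Fac N (w0 n) C₀)
    {D : Finset (Fin m)} (hD : Fac N (w0 n) D) :
    (∀ u v, ConnRel n N C₀ u v ↔ ConnRel n N D u v) ∧
      brickVector n N D - brickVector n N C₀ ∈
        Submodule.span ℝ {g : Fin n → ℝ | ∃ u v, ConnRel n N C₀ u v ∧ g = eVec u - eVec v} := by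
  have hpath := conn_facets n m N (w0 n) C₀ D h₀ hD
  clear hD
  induction hpath with
  | refl => exact ⟨fun u v => Iff.rfl, by rw [sub_self]; exact Submodule.zero_mem _⟩
  | @tail X Y hsteps hstep ih =>
    obtain ⟨hiff, a, b, k, hConnX, hbv⟩ := step_props hstep
    obtain ⟨ihiff, ihmem⟩ := ih
    constructor
    · intro u v
      exact (ihiff u v).trans (hiff u v)
    · have hgen : eVec b - eVec a ∈
          {g : Fin n → ℝ | ∃ u v, ConnRel n N C₀ u v ∧ g = eVec u - eVec v} :=
        ⟨b, a, connRel_symm ((ihiff a b).mpr hConnX), rfl⟩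
      have he : brickVector n N Y - brickVector n N C₀ =
          (brickVector n N X - brickVector n N C₀) + k • (eVec b - eVec a) := by
        rw [hbv]
        exact add_sub_right_comm _ _ _
      rw [he]
      exact Submodule.add_mem _ ihmem (Submodule.smul_mem _ k (Submodule.subset_span hgen))

lemma gen_mem_vectorSpan {N : Fin m → Fin (n - 1)} {C₀ : Finset (Fin m)}
    (h₀ : Fac N (w0 n) C₀) {u v : Fin n} (huv : ConnRel n N C₀ u v) :
    eVec u - eVec v ∈
      vectorSpan ℝ {x : Fin n → ℝ | ∃ C, IsArr n N C ∧ brickVector n N C = x} := by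
  set S := {x : Fin n → ℝ | ∃ C, IsArr n N C ∧ brickVector n N C = x} with hS
  have harc : ∀ x y : Fin n, ArcRel n N C₀ x y → eVec x - eVec y ∈ vectorSpan ℝ S := by
    rintro x y ⟨j₀, hj₀, rfl, rfl⟩
    obtain ⟨C', t₁, k, hC', -, -, hk1, hkf, -, -, -⟩ := flip_main N C₀ h₀ j₀ hj₀
    have hdiff : brickVector n N C' - brickVector n N C₀ =
        (k : ℝ) • (eVec (arcTgt n N C₀ j₀) - eVec (arcSrc n N C₀ j₀)) := by
      funext i
      simp only [Pi.sub_apply, Pi.smul_apply, smul_eq_mul]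
      rw [hkf i]
      rw [show eVec (arcTgt n N C₀ j₀) i = (if i = arcTgt n N C₀ j₀ then (1:ℝ) else 0) from rfl,
        show eVec (arcSrc n N C₀ j₀) i = (if i = arcSrc n N C₀ j₀ then (1:ℝ) else 0) from rfl]
      ring
    have hmem : brickVector n N C' - brickVector n N C₀ ∈ vectorSpan ℝ S := by
      have h1 : brickVector n N C' ∈ S := ⟨C', (isArr_iff_fac N C').mpr hC', rfl⟩
      have h2 : brickVector n N C₀ ∈ S := ⟨C₀, (isArr_iff_fac N C₀).mpr h₀, rfl⟩
      have := vsub_mem_vectorSpan ℝ h1 h2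
      rwa [vsub_eq_sub] at this
    have hk0 : (k : ℝ) ≠ 0 := Nat.cast_ne_zero.mpr (by omega)
    have he : eVec (arcSrc n N C₀ j₀) - eVec (arcTgt n N C₀ j₀) =
        (-(1 / (k : ℝ))) • (brickVector n N C' - brickVector n N C₀) := by
      rw [hdiff, smul_smul]
      rw [show (-(1 / (k : ℝ))) * k = -1 by field_simp]
      rw [neg_one_smul, neg_sub]
    rw [he]
    exact Submodule.smul_mem _ _ hmem
  induction huv with
  | refl => rw [sub_self]; exact Submodule.zero_mem _
  | @tail x y hxy hstep ih =>
    have hstep' : eVec x - eVec y ∈ vectorSpan ℝ S := by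
      rcases hstep with hA | hA
      · exact harc x y hA
      · have hm := harc y x hA
        rw [show eVec x - eVec y = -(eVec y - eVec x) from (neg_sub _ _).symm]
        exact Submodule.neg_mem _ hm
    rw [show eVec u - eVec y = (eVec u - eVec x) + (eVec x - eVec y) from
      (sub_add_sub_cancel _ _ _).symm]
    exact Submodule.add_mem _ ih hstep'

end Assembly
/-- The brick polytope of an irreducible sorting network with `n` levels has
dimension `n - 1`.  More generally, the brick polytope of a sorting network with `n` levels
and `p` irreducible components has dimension `n - p`. -/
theorem brickPolytope_dim (n m : ℕ) (N : Fin m → Fin (n - 1))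
    (C₀ : Finset (Fin m)) (h₀ : IsArr n N C₀) :
    (Irreducible n N → dimOf (brickPolytope n N) = n - 1) ∧
    dimOf (brickPolytope n N) = n - {U : Finset (Fin n) | IsComp n N C₀ U}.ncard := by
  classical
  have h₀' : Fac N (w0 n) C₀ := (isArr_iff_fac N C₀).mp h₀
  set S := {x : Fin n → ℝ | ∃ C, IsArr n N C ∧ brickVector n N C = x} with hS
  set Dgen := {g : Fin n → ℝ | ∃ u v, ConnRel n N C₀ u v ∧ g = eVec u - eVec v} with hDgen
  have hVD : vectorSpan ℝ S = Submodule.span ℝ Dgen := by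
    apply le_antisymm
    · rw [vectorSpan_def, Submodule.span_le]
      rintro g hg
      rw [Set.mem_vsub] at hg
      obtain ⟨x, hx, y, hy, rfl⟩ := hg
      obtain ⟨Cx, hCx, rfl⟩ := hx
      obtain ⟨Cy, hCy, rfl⟩ := hy
      have px := (path_props h₀' ((isArr_iff_fac N Cx).mp hCx)).2
      have py := (path_props h₀' ((isArr_iff_fac N Cy).mp hCy)).2
      have he : brickVector n N Cx -ᵥ brickVector n N Cy =
          (brickVector n N Cx - brickVector n N C₀) -
            (brickVector n N Cy - brickVector n N C₀) := by
        rw [vsub_eq_sub, sub_sub_sub_cancel_right]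
      rw [SetLike.mem_coe, he]
      exact Submodule.sub_mem _ px py
    · rw [Submodule.span_le]
      rintro g ⟨u, v, huv, rfl⟩
      exact gen_mem_vectorSpan h₀' huv
  have hdim : dimOf (brickPolytope n N) = Module.finrank ℝ (Submodule.span ℝ Dgen) := by
    have h1 : brickPolytope n N = convexHull ℝ S := rfl
    unfold dimOf
    rw [h1, affineSpan_convexHull, direction_affineSpan, hVD]
  have hcomp : {U : Finset (Fin n) | IsComp n N C₀ U}.ncard =
      (univ.image (fun a : Fin n => univ.filter (fun b => ConnRel n N C₀ a b))).card := by
    have hset : {U : Finset (Fin n) | IsComp n N C₀ U} =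
        ↑(univ.image (fun a : Fin n => univ.filter (fun b => ConnRel n N C₀ a b))) := by
      ext U
      simp only [Set.mem_setOf_eq, IsComp, Finset.mem_coe, Finset.mem_image, Finset.mem_univ,
        true_and]
      constructor
      · rintro ⟨a, rfl⟩
        exact ⟨a, rfl⟩
      · rintro ⟨a, rfl⟩
        exact ⟨a, rfl⟩
    rw [hset, Set.ncard_coe_finset]
  have hmain : dimOf (brickPolytope n N) =
      n - {U : Finset (Fin n) | IsComp n N C₀ U}.ncard := by
    rw [hdim, hcomp, hDgen]
    exact dim_span_conn (ConnRel n N C₀) (fun a => Relation.ReflTransGen.refl)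
      (fun h => connRel_symm h) (fun h1 h2 => connRel_trans h1 h2)
  refine ⟨?_, hmain⟩
  intro hirr
  rw [hmain]
  have hconn : ∀ a b, ConnRel n N C₀ a b := hirr C₀ h₀
  rcases Nat.eq_zero_or_pos n with hn | hn
  · subst hn
    omega
  · have hone : {U : Finset (Fin n) | IsComp n N C₀ U}.ncard = 1 := by
      rw [hcomp]
      have hclass : ∀ a : Fin n, univ.filter (fun b => ConnRel n N C₀ a b) = univ :=
        fun a => Finset.filter_true_of_mem (fun b _ => hconn a b)
      have himg : (univ.image (fun a : Fin n => univ.filter (fun b => ConnRel n N C₀ a b))) =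
          (univ : Finset (Fin n)).image (fun _ => (univ : Finset (Fin n))) :=
        Finset.image_congr (fun a _ => hclass a)
      rw [himg, Finset.image_const (Finset.univ_nonempty_iff.mpr ⟨⟨0, hn⟩⟩)]
      exact Finset.card_singleton _
    rw [hone]

end BrickP
end
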